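/- arXiv:1808.05918 — 6 statements merged into one kernel-verified Lean document; each statement's English description precedes it below -/
import Mathlib

section
/- If [z,x] is a length-two Bruhat interval in a Coxeter group W with the two intermediate elements y and ỹ, and z = r_α y = r_γ ỹ, x = r_β y = r_δ ỹ for reflections r_α, r_β, r_γ, r_δ, then r_γ and r_δ lie in the reflection subgroup generated by r_α and r_β. -/
open Relation

variable {B : Type*}

/-- One step in the Bruhat order of a Coxeter group: multiply on the right by a
reflection, increasing the length. The Bruhat order is the reflexive-transitive
closure of this relation. -/
def BruhatStep {W : Type*} [Group W] {M : CoxeterMatrix B} (cs : CoxeterSystem M W)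
    (a b : W) : Prop :=
  ∃ t : W, cs.IsReflection t ∧ b = a * t ∧ cs.length a < cs.length b

/-- The Bruhat order on a Coxeter group. -/
def BruhatLE {W : Type*} [Group W] {M : CoxeterMatrix B} (cs : CoxeterSystem M W)
    (a b : W) : Prop :=
  Relation.ReflTransGen (BruhatStep cs) a b

/-- The strict Bruhat order on a Coxeter group. -/
def BruhatLT {W : Type*} [Group W] {M : CoxeterMatrix B} (cs : CoxeterSystem M W)
    (a b : W) : Prop :=
  BruhatLE cs a b ∧ a ≠ b

open List

namespace Statement0Aux

open scoped Classical

variable {B : Type*} {W : Type*} [Group W] {M : CoxeterMatrix B} (cs : CoxeterSystem M W)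

local prefix:100 "σ" => cs.simple
local prefix:100 "π" => cs.wordProd
local prefix:100 "ℓ" => cs.length

/-- The function underlying the sign permutation associated to a simple reflection. -/
noncomputable def sigmaFun (i : B) : W × ℤˣ → W × ℤˣ :=
  fun p => (σ i * p.1 * σ i, if p.1 = σ i then -p.2 else p.2)

theorem simple_conj_eq_iff (i : B) (t : W) : σ i * t * σ i = σ i ↔ t = σ i := by
  constructor
  · intro h
    have := congrArg (fun u => σ i * u * σ i) h
    simpa [mul_assoc, cs.simple_mul_simple_cancel_left, cs.simple_mul_simple_cancel_right,
      ← mul_assoc] using this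
  · rintro rfl
    simp [mul_assoc, cs.simple_mul_simple_cancel_right]

theorem sigmaFun_invol (i : B) : Function.Involutive (sigmaFun cs i) := by
  rintro ⟨t, ε⟩
  simp only [sigmaFun, simple_conj_eq_iff]
  rcases eq_or_ne t (σ i) with rfl | h
  · simp [mul_assoc, cs.simple_mul_simple_cancel_right]
  · simp only [if_neg h]
    have : cs.simple i * (cs.simple i * t * cs.simple i) * cs.simple i = t := by
      rw [← mul_assoc, ← mul_assoc, cs.simple_mul_simple_self, one_mul,
        mul_assoc, cs.simple_mul_simple_self, mul_one]
    simp [this]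

/-- The sign permutation associated to a simple reflection. -/
noncomputable def sigma (i : B) : Equiv.Perm (W × ℤˣ) := (sigmaFun_invol cs i).toPerm

theorem sigma_apply (i : B) (t : W) (ε : ℤˣ) :
    sigma cs i (t, ε) = (σ i * t * σ i, if t = σ i then -ε else ε) := rfl

end Statement0Aux

namespace Statement0Aux

open scoped Classical

section

variable {B : Type*} {W : Type*} [Group W] {M : CoxeterMatrix B} (cs : CoxeterSystem M W)

local prefix:100 "σ" => cs.simple
local prefix:100 "π" => cs.wordProd
local prefix:100 "ℓ" => cs.length

private theorem conj_eq_iff (g t u : W) : g * t * g⁻¹ = u ↔ t = g⁻¹ * u * g := by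
  constructor
  · rintro rfl; group
  · rintro rfl; group

private theorem conj_succ (g t : W) (q : ℕ) :
    g * (g ^ q * t * (g ^ q)⁻¹) * g⁻¹ = g ^ (q + 1) * t * (g ^ (q + 1))⁻¹ := by
  rw [pow_succ']; group

private theorem simple_conj_conj (i : B) (X : W) : σ i * (σ i * X * σ i) * σ i = X := by
  rw [← mul_assoc, ← mul_assoc, cs.simple_mul_simple_self, one_mul, mul_assoc,
    cs.simple_mul_simple_self, mul_one]

theorem simple_conj_pow (i i' : B) (q : ℕ) :
    σ i' * (σ i * σ i') ^ q * σ i' = ((σ i * σ i') ^ q)⁻¹ := by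
  have h0 : σ i' * (σ i * σ i') * (σ i')⁻¹ = (σ i * σ i')⁻¹ := by
    rw [mul_inv_rev, cs.inv_simple, cs.inv_simple, ← mul_assoc, mul_assoc (σ i' * σ i)]
    rw [cs.simple_mul_simple_self, mul_one]
  calc σ i' * (σ i * σ i') ^ q * σ i'
      = σ i' * (σ i * σ i') ^ q * (σ i')⁻¹ := by rw [cs.inv_simple]
    _ = (σ i' * (σ i * σ i') * (σ i')⁻¹) ^ q := (conj_pow ..).symm
    _ = ((σ i * σ i')⁻¹) ^ q := by rw [h0]
    _ = ((σ i * σ i') ^ q)⁻¹ := (inv_pow ..)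

theorem conj_simple_pow_E1 (i i' : B) (q : ℕ) :
    ((σ i * σ i') ^ q)⁻¹ * σ i' * (σ i * σ i') ^ q = σ i' * (σ i * σ i') ^ (2 * q) := by
  have h := simple_conj_pow cs i i' q
  calc ((σ i * σ i') ^ q)⁻¹ * σ i' * (σ i * σ i') ^ q
      = (σ i' * (σ i * σ i') ^ q * σ i') * σ i' * (σ i * σ i') ^ q := by rw [h]
    _ = σ i' * (σ i * σ i') ^ q * (σ i' * σ i') * (σ i * σ i') ^ q := by
        rw [mul_assoc (σ i' * (σ i * σ i') ^ q), ← mul_assoc]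
    _ = σ i' * ((σ i * σ i') ^ q * (σ i * σ i') ^ q) := by
        rw [cs.simple_mul_simple_self, mul_one, mul_assoc]
    _ = σ i' * (σ i * σ i') ^ (2 * q) := by rw [← pow_add, two_mul]

theorem conj_simple_pow_E2 (i i' : B) (q : ℕ) :
    ((σ i * σ i') ^ q)⁻¹ * (σ i' * σ i * σ i') * (σ i * σ i') ^ q
      = σ i' * (σ i * σ i') ^ (2 * q + 1) := by
  have key : σ i' * σ i * σ i' = σ i' * (σ i * σ i') := by rw [mul_assoc]
  calc ((σ i * σ i') ^ q)⁻¹ * (σ i' * σ i * σ i') * (σ i * σ i') ^ q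
      = ((σ i * σ i') ^ q)⁻¹ * σ i' * ((σ i * σ i') * (σ i * σ i') ^ q) := by
        rw [key]; simp only [mul_assoc]
    _ = (((σ i * σ i') ^ q)⁻¹ * σ i' * (σ i * σ i') ^ q) * (σ i * σ i') := by
        rw [← pow_succ', pow_succ]; simp only [mul_assoc]
    _ = σ i' * (σ i * σ i') ^ (2 * q) * (σ i * σ i') := by rw [conj_simple_pow_E1]
    _ = σ i' * (σ i * σ i') ^ (2 * q + 1) := by rw [pow_succ, mul_assoc]

private theorem if_neg_units (c d : Prop) [Decidable c] [Decidable d] (h : c ↔ d) (x : ℤˣ) :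
    (if c then -x else x) = (if d then (-1 : ℤˣ) else 1) * x := by
  split_ifs with h1 h2 h2 <;> simp_all

theorem sigma_mul_pow_apply (i i' : B) (q : ℕ) (t : W) (ε : ℤˣ) :
    ((sigma cs i * sigma cs i') ^ q) (t, ε) =
      ((σ i * σ i') ^ q * t * ((σ i * σ i') ^ q)⁻¹,
        (∏ r ∈ Finset.range (2 * q),
          (if t = σ i' * (σ i * σ i') ^ r then (-1 : ℤˣ) else 1)) * ε) := by
  induction q with
  | zero => simp
  | succ q ih =>
    rw [pow_succ', Equiv.Perm.mul_apply, ih, Equiv.Perm.mul_apply, sigma_apply]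
    rw [sigma_apply]
    have hc1 : ((σ i * σ i') ^ q * t * (((σ i * σ i') ^ q))⁻¹ = σ i')
        ↔ (t = σ i' * (σ i * σ i') ^ (2 * q)) := by
      rw [conj_eq_iff, conj_simple_pow_E1]
    have hc2 : (σ i' * ((σ i * σ i') ^ q * t * (((σ i * σ i') ^ q))⁻¹) * σ i' = σ i)
        ↔ (t = σ i' * (σ i * σ i') ^ (2 * q + 1)) := by
      have hstep : (σ i' * ((σ i * σ i') ^ q * t * (((σ i * σ i') ^ q))⁻¹) * σ i' = σ i)
          ↔ ((σ i * σ i') ^ q * t * (((σ i * σ i') ^ q))⁻¹ = σ i' * σ i * σ i') := by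
        constructor
        · intro h
          have h2 := congrArg (fun u => σ i' * u * σ i') h
          rw [simple_conj_conj] at h2
          rw [h2]
        · intro h
          rw [h, simple_conj_conj]
      rw [hstep, conj_eq_iff, conj_simple_pow_E2]
    congr 1
    · calc σ i * (σ i' * ((σ i * σ i') ^ q * t * ((σ i * σ i') ^ q)⁻¹) * σ i') * σ i
          = (σ i * σ i') * ((σ i * σ i') ^ q * t * ((σ i * σ i') ^ q)⁻¹) * (σ i * σ i')⁻¹ := by
            rw [mul_inv_rev, cs.inv_simple, cs.inv_simple]; group
        _ = (σ i * σ i') ^ (q + 1) * t * ((σ i * σ i') ^ (q + 1))⁻¹ := conj_succ ..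
    · rw [if_neg_units _ _ hc1, if_neg_units _ _ hc2]
      rw [show 2 * (q + 1) = (2 * q + 1) + 1 by ring]
      rw [Finset.prod_range_succ, Finset.prod_range_succ]
      generalize (∏ r ∈ Finset.range (2 * q),
        (if t = σ i' * (σ i * σ i') ^ r then (-1 : ℤˣ) else 1)) = P
      generalize (if t = σ i' * (σ i * σ i') ^ (2 * q) then (-1 : ℤˣ) else 1) = A
      generalize (if t = σ i' * (σ i * σ i') ^ (2 * q + 1) then (-1 : ℤˣ) else 1) = C
      dsimp only
      ac_rfl

theorem isLiftable_sigma :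
    M.IsLiftable (fun i => (sigma cs i : Equiv.Perm (W × ℤˣ))) := by
  intro i i'
  apply Equiv.ext
  rintro ⟨t, ε⟩
  rw [show ((fun i => sigma cs i) i * (fun i => sigma cs i) i') = sigma cs i * sigma cs i'
    from rfl]
  rw [sigma_mul_pow_apply]
  have hm : (σ i * σ i') ^ M i i' = 1 := cs.simple_mul_simple_pow i i'
  have hprod : (∏ r ∈ Finset.range (2 * M i i'),
      (if t = σ i' * (σ i * σ i') ^ r then (-1 : ℤˣ) else 1)) = 1 := by
    rw [two_mul, Finset.prod_range_add, ← Finset.prod_mul_distrib]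
    apply Finset.prod_eq_one
    intro r _
    have heq : σ i' * (σ i * σ i') ^ (M i i' + r) = σ i' * (σ i * σ i') ^ r := by
      rw [pow_add, hm, one_mul]
    rw [heq]
    exact Int.units_mul_self _
  rw [hm, hprod]
  simp

/-- The sign representation of the Coxeter group on `W × ℤˣ`. -/
noncomputable def rho : W →* Equiv.Perm (W × ℤˣ) :=
  cs.lift ⟨fun i => sigma cs i, isLiftable_sigma cs⟩

theorem rho_simple (i : B) : rho cs (σ i) = sigma cs i :=
  cs.lift_apply_simple (isLiftable_sigma cs) i

end

end Statement0Aux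

namespace Statement0Aux

open scoped Classical

section

variable {B : Type*} {W : Type*} [Group W] {M : CoxeterMatrix B} (cs : CoxeterSystem M W)

local prefix:100 "σ" => cs.simple
local prefix:100 "π" => cs.wordProd
local prefix:100 "ℓ" => cs.length

theorem rho_wordProd (ω : List B) (t : W) (ε : ℤˣ) :
    rho cs (π ω) (t, ε) =
      (π ω * t * (π ω)⁻¹, (-1 : ℤˣ) ^ ((cs.rightInvSeq ω).count t) * ε) := by
  induction ω using List.reverseRecOn generalizing t ε with
  | nil => simp [rho]
  | append_singleton ω i ih =>
    have hcount : ((cs.rightInvSeq (ω ++ [i])).count t)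
        = (cs.rightInvSeq ω).count (σ i * t * σ i) + (if t = σ i then 1 else 0) := by
      rw [← List.concat_eq_append, cs.rightInvSeq_concat, List.concat_eq_append,
        List.count_append]
      congr 1
      · have h1 : t = (MulAut.conj (σ i)) (σ i * t * σ i) := by
          rw [MulAut.conj_apply, cs.inv_simple, simple_conj_conj]
        nth_rw 1 [h1]
        exact List.count_map_of_injective _ _ (MulAut.conj (σ i)).injective _
      · rcases eq_or_ne t (σ i) with rfl | h
        · simp
        · simp [List.count_singleton', if_neg h, Ne.symm h]
    have hπ : π (ω ++ [i]) = π ω * σ i := by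
      rw [cs.wordProd_append, cs.wordProd_singleton]
    rw [hπ, map_mul, Equiv.Perm.mul_apply, rho_simple, sigma_apply, ih, hcount]
    congr 1
    · rw [mul_inv_rev, cs.inv_simple]
      simp only [mul_assoc]
    · rcases eq_or_ne t (σ i) with rfl | h
      · rw [if_pos rfl, if_pos rfl, pow_succ, mul_neg_one, neg_mul, mul_neg]
      · rw [if_neg h, if_neg h, add_zero]

theorem rho_apply_fst (w t : W) (ε : ℤˣ) : (rho cs w (t, ε)).1 = w * t * w⁻¹ := by
  obtain ⟨ω, rfl⟩ := cs.wordProd_surjective w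
  rw [rho_wordProd]

theorem rho_apply (w t : W) (ε : ℤˣ) :
    rho cs w (t, ε) = (w * t * w⁻¹, (rho cs w (t, 1)).2 * ε) := by
  obtain ⟨ω, rfl⟩ := cs.wordProd_surjective w
  rw [rho_wordProd, rho_wordProd]
  simp [mul_assoc]

theorem rho_refl {t : W} (ht : cs.IsReflection t) (ε : ℤˣ) :
    rho cs t (t, ε) = (t, -ε) := by
  obtain ⟨w, i, rfl⟩ := ht
  have hfix : w⁻¹ * (w * σ i * w⁻¹) * w⁻¹⁻¹ = σ i := by group
  have h1 : ∀ δ : ℤˣ, rho cs w⁻¹ (w * σ i * w⁻¹, δ)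
      = (σ i, (rho cs w⁻¹ (w * σ i * w⁻¹, 1)).2 * δ) := by
    intro δ
    rw [rho_apply, hfix]
  have h2 : (rho cs w (σ i, 1)).2 * (rho cs w⁻¹ (w * σ i * w⁻¹, 1)).2 = 1 := by
    have h5 : rho cs w ((rho cs w⁻¹) (w * σ i * w⁻¹, (1:ℤˣ))) = (w * σ i * w⁻¹, 1) := by
      rw [← Equiv.Perm.mul_apply, ← map_mul, mul_inv_cancel, map_one, Equiv.Perm.one_apply]
    rw [h1 1, mul_one, rho_apply] at h5
    exact (Prod.ext_iff.mp h5).2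
  have hdecomp : rho cs (w * σ i * w⁻¹) (w * σ i * w⁻¹, ε)
      = rho cs w (sigma cs i (rho cs w⁻¹ (w * σ i * w⁻¹, ε))) := by
    rw [map_mul, map_mul, Equiv.Perm.mul_apply, Equiv.Perm.mul_apply, rho_simple]
  rw [hdecomp, h1 ε, sigma_apply, if_pos rfl]
  rw [show σ i * σ i * σ i = σ i by rw [cs.simple_mul_simple_self, one_mul]]
  rw [rho_apply]
  congr 1
  rw [mul_neg, ← mul_assoc, h2, one_mul]

theorem mem_rightInvSeq_of_isRightInversion {ω : List B} (hω : cs.IsReduced ω) {t : W}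
    (ht : cs.IsReflection t) (hlt : ℓ (π ω * t) < ℓ (π ω)) : t ∈ cs.rightInvSeq ω := by
  have hsign : (rho cs (π ω) (t, 1)).2 = (-1 : ℤˣ) ^ ((cs.rightInvSeq ω).count t) := by
    rw [rho_wordProd, mul_one]
  -- sign of w t at t is +1
  have h3 : (rho cs (π ω * t) (t, 1)).2 = 1 := by
    obtain ⟨ω', hred', hprod'⟩ := cs.exists_reduced_word' (π ω * t)
    rw [hprod', rho_wordProd, mul_one]
    have hnmem : t ∉ cs.rightInvSeq ω' := by
      intro hmem
      have hinv := cs.isRightInversion_of_mem_rightInvSeq hred' hmem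
      rw [← hprod'] at hinv
      have : ℓ (π ω * t * t) < ℓ (π ω * t) := hinv.2
      rw [mul_assoc, ht.mul_self, mul_one] at this
      omega
    rw [List.count_eq_zero.mpr hnmem, pow_zero]
  -- hence sign of w at t is -1
  have h4 : (rho cs (π ω) (t, 1)).2 = -1 := by
    have h5 : rho cs (π ω) (t, 1) = rho cs (π ω * t) (rho cs t (t, 1)) := by
      rw [← Equiv.Perm.mul_apply, ← map_mul, mul_assoc, ht.mul_self, mul_one]
    rw [rho_refl cs ht 1] at h5
    rw [rho_apply cs (π ω * t) t (-1), h3, one_mul] at h5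
    rw [h5]
  rw [hsign] at h4
  by_contra hmem
  rw [List.count_eq_zero.mpr hmem, pow_zero] at h4
  exact absurd h4 (by decide)

/-- **Strong exchange property** (left version). -/
theorem strong_exchange_left {ω : List B} (hω : cs.IsReduced ω) {t : W}
    (ht : cs.IsReflection t) (hlt : ℓ (t * π ω) < ℓ (π ω)) :
    ∃ j, j < ω.length ∧ t = (cs.leftInvSeq ω).getD j 1 ∧ π (ω.eraseIdx j) = t * π ω := by
  have hrev : cs.IsReduced ω.reverse := (cs.isReduced_reverse_iff ω).mpr hω
  have hlen : ℓ (π ω.reverse * t) < ℓ (π ω.reverse) := by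
    rw [cs.wordProd_reverse]
    have : (π ω)⁻¹ * t = (t * π ω)⁻¹ := by
      rw [mul_inv_rev, ht.inv]
    rw [this, cs.length_inv, cs.length_inv]
    exact hlt
  have hmem : t ∈ cs.rightInvSeq ω.reverse :=
    mem_rightInvSeq_of_isRightInversion cs hrev ht hlen
  rw [cs.rightInvSeq_reverse, List.mem_reverse] at hmem
  obtain ⟨j, hj, hjt⟩ := List.mem_iff_getElem.mp hmem
  rw [cs.length_leftInvSeq] at hj
  refine ⟨j, hj, ?_, ?_⟩
  · rw [← hjt, List.getD_eq_getElem _ 1 (by rwa [cs.length_leftInvSeq])]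
  · rw [← cs.getD_leftInvSeq_mul_wordProd ω j,
      List.getD_eq_getElem _ 1 (by rwa [cs.length_leftInvSeq]), hjt]

end

end Statement0Aux

namespace Statement0Aux

theorem eraseIdx_append_left {α : Type*} {l l' : List α} {n : ℕ} (h : n < l.length) :
    (l ++ l').eraseIdx n = l.eraseIdx n ++ l' := by
  induction l generalizing n with
  | nil => simp at h
  | cons a l ih =>
    cases n with
    | zero => simp
    | succ n =>
      simp only [List.cons_append, List.eraseIdx_cons_succ, List.cons.injEq, true_and]
      exact ih (by simpa using h)

theorem eraseIdx_append_last {α : Type*} (l : List α) (a : α) :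
    (l ++ [a]).eraseIdx l.length = l := by
  induction l with
  | nil => rfl
  | cons b l ih => simpa using ih

theorem closure_pair_conj {G : Type*} [Group G] (a b : G) (ha : a * a = 1) :
    Subgroup.closure ({a * b * a, a} : Set G) = Subgroup.closure {a, b} := by
  apply _root_.le_antisymm
  · rw [Subgroup.closure_le]
    intro x hx
    simp only [Set.mem_insert_iff, Set.mem_singleton_iff] at hx
    rcases hx with rfl | rfl
    · exact mul_mem (mul_mem (Subgroup.subset_closure (by simp))
        (Subgroup.subset_closure (by simp))) (Subgroup.subset_closure (by simp))
    · exact Subgroup.subset_closure (by simp)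
  · rw [Subgroup.closure_le]
    intro x hx
    simp only [Set.mem_insert_iff, Set.mem_singleton_iff] at hx
    rcases hx with rfl | rfl
    · exact Subgroup.subset_closure (by simp)
    · have hb : x = a * (a * x * a) * a := by
        rw [show a * (a * x * a) * a = (a * a) * x * (a * a) by group, ha, one_mul, mul_one]
      have hmem1 : a ∈ Subgroup.closure ({a * x * a, a} : Set G) :=
        Subgroup.subset_closure (Set.mem_insert_of_mem _ rfl)
      have hmem2 : a * x * a ∈ Subgroup.closure ({a * x * a, a} : Set G) :=
        Subgroup.subset_closure (Set.mem_insert _ _)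
      have hx2 := mul_mem (mul_mem hmem1 hmem2) hmem1
      rwa [← hb] at hx2

end Statement0Aux

namespace Statement0Aux

open scoped Classical

section

variable {B : Type*} {W : Type*} [Group W] {M : CoxeterMatrix B} (cs : CoxeterSystem M W)

local prefix:100 "σ" => cs.simple
local prefix:100 "π" => cs.wordProd
local prefix:100 "ℓ" => cs.length

/-- The key descent step: if `m` has a reduced word of the form `θ ++ [i]` and `t` is a
reflection with `t * m` shorter than `m`, then either `t * m = m * σ i`, or `(t * m) * σ i`
is represented by a word one letter shorter than `θ`. -/
theorem step (i : B) (θ : List B) (m t u : W)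
    (hθprod : π θ = m * σ i) (hθlen : ℓ m = θ.length + 1)
    (ht : cs.IsReflection t) (htu : t * m = u) (hu : ℓ u < ℓ m) :
    u = m * σ i ∨ (∃ φ : List B, π φ = u * σ i ∧ φ.length + 1 = θ.length) := by
  have hprod2 : π (θ ++ [i]) = m := by
    rw [cs.wordProd_append, cs.wordProd_singleton, hθprod, cs.simple_mul_simple_cancel_right]
  have hred : cs.IsReduced (θ ++ [i]) := by
    show ℓ (π (θ ++ [i])) = _
    rw [hprod2, List.length_append, List.length_singleton]
    omega
  have hlt : ℓ (t * π (θ ++ [i])) < ℓ (π (θ ++ [i])) := by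
    rw [hprod2, htu]; exact hu
  obtain ⟨j, hj, _, hjprod⟩ := strong_exchange_left cs hred ht hlt
  rw [hprod2, htu] at hjprod
  rw [List.length_append, List.length_singleton] at hj
  rcases Nat.lt_or_ge j θ.length with hjlt | hjge
  · right
    refine ⟨θ.eraseIdx j, ?_, List.length_eraseIdx_add_one hjlt⟩
    rw [eraseIdx_append_left hjlt, cs.wordProd_append, cs.wordProd_singleton] at hjprod
    rw [← hjprod, cs.simple_mul_simple_cancel_right]
  · left
    have hje : j = θ.length := by omega
    rw [hje, eraseIdx_append_last] at hjprod
    rw [← hjprod, hθprod]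

theorem closure_eq_of_diamond (n : ℕ) :
    ∀ (z y yt x ra rb rc rd : W), ℓ x = n →
    ℓ x = ℓ z + 2 → ℓ y = ℓ z + 1 → ℓ yt = ℓ z + 1 → y ≠ yt →
    cs.IsReflection ra → cs.IsReflection rb → cs.IsReflection rc → cs.IsReflection rd →
    z = ra * y → x = rb * y → z = rc * yt → x = rd * yt →
    Subgroup.closure ({ra, rb} : Set W) = Subgroup.closure ({rc, rd} : Set W) := by
  induction n using Nat.strong_induction_on with
  | _ n IH =>
  intro z y yt x ra rb rc rd hxn hx hy hyt hne hra hrb hrc hrd hz1 hx1 hz2 hx2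
  -- basic derived equations
  have hyx : rb * x = y := by rw [hx1, ← mul_assoc, hrb.mul_self, one_mul]
  have hytx : rd * x = yt := by rw [hx2, ← mul_assoc, hrd.mul_self, one_mul]
  have hzy : ra * z = y := by rw [hz1, ← mul_assoc, hra.mul_self, one_mul]
  have hzyt : rc * z = yt := by rw [hz2, ← mul_assoc, hrc.mul_self, one_mul]
  have hrd_rel : rd = rb * ra * rc := by
    have h1 : rd = x * yt⁻¹ := by rw [hx2, mul_assoc, mul_inv_cancel, mul_one]
    have e : rb * (ra * (rc * yt)) = x := by rw [← hz2, hzy, ← hx1]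
    rw [h1, ← e]
    group
  -- find a right descent of x
  have hx_ne : x ≠ 1 := by
    intro h
    rw [h, cs.length_one] at hx
    omega
  obtain ⟨i, hi⟩ := cs.exists_rightDescent_of_ne_one hx_ne
  have hxs_len : ℓ (x * σ i) + 1 = ℓ x := (cs.isRightDescent_iff).mp hi
  obtain ⟨υ, hυred, hυprod⟩ := cs.exists_reduced_word' (x * σ i)
  have hυlen : ℓ x = υ.length + 1 := by
    have : ℓ (π υ) = υ.length := hυred
    rw [← hυprod] at this
    omega
  by_cases hAcase : y = x * σ i
  · -- Case A
    have hxy : x = y * σ i := by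
      rw [hAcase, cs.simple_mul_simple_cancel_right]
    rcases step cs i υ x rd yt hυprod.symm hυlen hrd hytx (by omega)
      with hyt_eq | ⟨φ, hφprod, hφlen⟩
    · exact absurd (hAcase.trans hyt_eq.symm) hne
    · have hφlen' : ℓ yt = φ.length + 1 := by omega
      have hyts_len : ℓ (yt * σ i) = ℓ z := by
        have h1 : ℓ (yt * σ i) ≤ φ.length := hφprod ▸ cs.length_wordProd_le φ
        rcases cs.length_mul_simple yt i with h | h <;> omega
      rcases step cs i φ yt rc z hφprod hφlen' hrc hz2.symm (by omega)
        with hz_eq | ⟨ψ, hψprod, hψlen⟩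
      · -- Case A1 : z = yt * σ i, hence rd = ra and rc = ra * rb * ra
        have hyt_z : yt = z * σ i := by
          rw [hz_eq, cs.simple_mul_simple_cancel_right]
        have h_rd_ra : rd = ra := by
          have h1 : rd * yt = ra * yt := by
            rw [← hx2, hyt_z, ← mul_assoc, hz1, hxy]
            rw [show ra * (ra * y) * σ i = (ra * ra) * y * σ i by group, hra.mul_self, one_mul]
          exact mul_right_cancel h1
        have h_rc : rc = ra * rb * rd := by
          rw [hrd_rel, show ra * rb * (rb * ra * rc) = ra * (rb * rb) * (ra * rc) by group,
            hrb.mul_self, mul_one, ← mul_assoc, hra.mul_self, one_mul]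
        rw [h_rc, h_rd_ra]
        exact (closure_pair_conj ra rb hra.mul_self).symm
      · -- Case A2 : recurse into the interval [z * σ i, y]
        have hzs_le : ℓ (z * σ i) ≤ ψ.length := hψprod ▸ cs.length_wordProd_le ψ
        have hzs : ℓ (z * σ i) + 1 = ℓ z := by
          rcases cs.length_mul_simple z i with h | h <;> omega
        have hz_ne : z ≠ yt * σ i := by
          intro h
          have : z * σ i = yt := by rw [h, cs.simple_mul_simple_cancel_right]
          rw [this] at hzs
          omega
        have hIH := IH (ℓ y) (by omega) (z * σ i) z (yt * σ i) y
          (z * σ i * z⁻¹) ra rc rd rfl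
          (by omega) (by omega) (by omega)
          hz_ne
          ⟨z, i, rfl⟩ hra hrc hrd
          (by group)
          hzy.symm
          (by rw [← mul_assoc, ← hz2])
          (by rw [← mul_assoc, ← hx2]; exact hAcase)
        have hconj : z * σ i * z⁻¹ = ra * rb * ra := by
          have e2 : ra * (rb * (ra * z)) = z * σ i := by
            rw [hzy, ← hx1, hxy, ← mul_assoc, ← hz1]
          rw [← e2]
          group
        rw [← hIH, hconj]
        exact (closure_pair_conj ra rb hra.mul_self).symm
  · by_cases hBcase : yt = x * σ i
    · -- Case B
      have hxyt : x = yt * σ i := by rw [hBcase, cs.simple_mul_simple_cancel_right]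
      rcases step cs i υ x rb y hυprod.symm hυlen hrb hyx (by omega)
        with hy_eq | ⟨φ, hφprod, hφlen⟩
      · exact absurd hy_eq hAcase
      have hφlen' : ℓ y = φ.length + 1 := by omega
      have hys_len : ℓ (y * σ i) = ℓ z := by
        have h1 : ℓ (y * σ i) ≤ φ.length := hφprod ▸ cs.length_wordProd_le φ
        rcases cs.length_mul_simple y i with h | h <;> omega
      rcases step cs i φ y ra z hφprod hφlen' hra hz1.symm (by omega)
        with hz_eq | ⟨ψ, hψprod, hψlen⟩
      · -- B1 : z = y * σ i, so rc = rb
        have h_rc_rb : rc = rb := by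
          have h1 : rc * yt = rb * yt := by
            rw [← hz2, hBcase, ← mul_assoc, hyx]
            exact hz_eq
          exact mul_right_cancel h1
        have h_rd : rd = rb * ra * rb := by rw [hrd_rel, h_rc_rb]
        rw [h_rc_rb, h_rd]
        rw [Set.pair_comm rb (rb * ra * rb), closure_pair_conj rb ra hrb.mul_self,
          Set.pair_comm ra rb]
      · -- B2 : recurse into [z * σ i, yt] with middle elements z and y * σ i
        have hzs_le : ℓ (z * σ i) ≤ ψ.length := hψprod ▸ cs.length_wordProd_le ψ
        have hzs : ℓ (z * σ i) + 1 = ℓ z := by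
          rcases cs.length_mul_simple z i with h | h <;> omega
        have hz_ne : z ≠ y * σ i := by
          intro h
          have h2 : z * σ i = y := by rw [h, cs.simple_mul_simple_cancel_right]
          rw [h2] at hzs
          omega
        have hIH := IH (ℓ yt) (by omega) (z * σ i) z (y * σ i) yt
          (z * σ i * z⁻¹) rc ra rb rfl
          (by omega) (by omega) (by omega)
          hz_ne
          ⟨z, i, rfl⟩ hrc hra hrb
          (by group)
          hzyt.symm
          (by rw [← mul_assoc, ← hz1])
          (by rw [← mul_assoc, ← hx1]; exact hBcase)
        have hu : z * σ i * z⁻¹ = rc * rd * rc := by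
          have e2 : rc * (rd * (rc * z)) = z * σ i := by
            rw [hzyt, ← hx2, hxyt, ← mul_assoc, ← hz2]
          rw [← e2]; group
        apply _root_.le_antisymm
        · rw [← hIH, Subgroup.closure_le]
          intro v hv
          simp only [Set.mem_insert_iff, Set.mem_singleton_iff] at hv
          rcases hv with rfl | rfl
          · rw [hu]
            exact mul_mem (mul_mem (Subgroup.subset_closure (Set.mem_insert _ _))
              (Subgroup.subset_closure (Set.mem_insert_of_mem _ rfl)))
              (Subgroup.subset_closure (Set.mem_insert _ _))
          · exact Subgroup.subset_closure (Set.mem_insert _ _)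
        · rw [Subgroup.closure_le]
          intro v hv
          simp only [Set.mem_insert_iff, Set.mem_singleton_iff] at hv
          have hrc_mem : rc ∈ Subgroup.closure ({ra, rb} : Set W) := by
            rw [← hIH]
            exact Subgroup.subset_closure (Set.mem_insert_of_mem _ rfl)
          rcases hv with rfl | rfl
          · exact hrc_mem
          · rw [hrd_rel]
            exact mul_mem (mul_mem (Subgroup.subset_closure (Set.mem_insert_of_mem _ rfl))
              (Subgroup.subset_closure (Set.mem_insert _ _))) hrc_mem
    · -- Case C : y ≠ x * σ i and yt ≠ x * σ i
      rcases step cs i υ x rb y hυprod.symm hυlen hrb hyx (by omega)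
        with hy_eq | ⟨φ, hφprod, hφlen⟩
      · exact absurd hy_eq hAcase
      rcases step cs i υ x rd yt hυprod.symm hυlen hrd hytx (by omega)
        with hyt_eq | ⟨φ', hφ'prod, hφ'len⟩
      · exact absurd hyt_eq hBcase
      have hys_len : ℓ (y * σ i) = ℓ z := by
        have h1 : ℓ (y * σ i) ≤ φ.length := hφprod ▸ cs.length_wordProd_le φ
        rcases cs.length_mul_simple y i with h | h <;> omega
      have hyts_len : ℓ (yt * σ i) = ℓ z := by
        have h1 : ℓ (yt * σ i) ≤ φ'.length := hφ'prod ▸ cs.length_wordProd_le φ'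
        rcases cs.length_mul_simple yt i with h | h <;> omega
      rcases step cs i φ y ra z hφprod (by omega) hra hz1.symm (by omega)
        with hz_eq | ⟨ψ, hψprod, hψlen⟩
      · have hzs_eq : z * σ i = y := by rw [hz_eq, cs.simple_mul_simple_cancel_right]
        rcases step cs i φ' yt rc z hφ'prod (by omega) hrc hz2.symm (by omega)
          with hz_eq' | ⟨ψ', hψ'prod, hψ'len⟩
        · have hzs_eq' : z * σ i = yt := by rw [hz_eq', cs.simple_mul_simple_cancel_right]
          exact absurd (hzs_eq.symm.trans hzs_eq') hne
        · have hzs_le : ℓ (z * σ i) ≤ ψ'.length := hψ'prod ▸ cs.length_wordProd_le ψ'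
          rw [hzs_eq] at hzs_le
          omega
      · rcases step cs i φ' yt rc z hφ'prod (by omega) hrc hz2.symm (by omega)
          with hz_eq' | ⟨ψ', hψ'prod, hψ'len⟩
        · have hzs_eq' : z * σ i = yt := by rw [hz_eq', cs.simple_mul_simple_cancel_right]
          have hzs_le : ℓ (z * σ i) ≤ ψ.length := hψprod ▸ cs.length_wordProd_le ψ
          rw [hzs_eq'] at hzs_le
          omega
        · have hzs_le : ℓ (z * σ i) ≤ ψ.length := hψprod ▸ cs.length_wordProd_le ψ
          have hzs : ℓ (z * σ i) + 1 = ℓ z := by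
            rcases cs.length_mul_simple z i with h | h <;> omega
          exact IH (ℓ (x * σ i)) (by omega) (z * σ i) (y * σ i) (yt * σ i) (x * σ i)
            ra rb rc rd rfl
            (by omega) (by omega) (by omega)
            (fun h => hne (by
              have h2 := congrArg (fun u => u * σ i) h
              simpa [cs.simple_mul_simple_cancel_right] using h2))
            hra hrb hrc hrd
            (by rw [← mul_assoc, ← hz1])
            (by rw [← mul_assoc, ← hx1])
            (by rw [← mul_assoc, ← hz2])
            (by rw [← mul_assoc, ← hx2])

end

end Statement0Aux


theorem bruhatLE_length_le {W : Type*} [Group W] {M : CoxeterMatrix B} (cs : CoxeterSystem M W)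
    {a b : W} (h : BruhatLE cs a b) : cs.length a ≤ cs.length b := by
  induction h with
  | refl => exact le_refl _
  | tail _ hstep ih =>
    obtain ⟨t, _, rfl, hlt⟩ := hstep
    omega

theorem bruhatLT_length_lt {W : Type*} [Group W] {M : CoxeterMatrix B} (cs : CoxeterSystem M W)
    {a b : W} (h : BruhatLT cs a b) : cs.length a < cs.length b := by
  obtain ⟨hle, hne⟩ := h
  rcases Relation.ReflTransGen.cases_head hle with rfl | ⟨c, hstep, hrest⟩
  · exact absurd rfl hne
  · obtain ⟨t, _, rfl, hlt⟩ := hstep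
    have := bruhatLE_length_le cs hrest
    omega

/-- If `[z,x]` is a length-two Bruhat interval with the two intermediate
elements `y` and `ỹ`, and `z = r_α y = r_γ ỹ`, `x = r_β y = r_δ ỹ` for reflections
`r_α, r_β, r_γ, r_δ`, then `r_γ` and `r_δ` lie in the (reflection) subgroup generated by
`r_α` and `r_β`. -/
theorem middle_reflections_in_dihedral_subgroup
    {W : Type*} [Group W] {M : CoxeterMatrix B} (cs : CoxeterSystem M W)
    (z y ytilde x : W)
    (hlen : cs.length x = cs.length z + 2)
    (hzy : BruhatLT cs z y) (hyx : BruhatLT cs y x)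
    (hzyt : BruhatLT cs z ytilde) (hytx : BruhatLT cs ytilde x)
    (hne : y ≠ ytilde)
    (ra rb rc rd : W)
    (hra : cs.IsReflection ra) (hrb : cs.IsReflection rb)
    (hrc : cs.IsReflection rc) (hrd : cs.IsReflection rd)
    (hz1 : z = ra * y) (hx1 : x = rb * y)
    (hz2 : z = rc * ytilde) (hx2 : x = rd * ytilde) :
    rc ∈ Subgroup.closure {ra, rb} ∧ rd ∈ Subgroup.closure {ra, rb} := by
  have h1 := bruhatLT_length_lt cs hzy
  have h2 := bruhatLT_length_lt cs hyx
  have h3 := bruhatLT_length_lt cs hzyt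
  have h4 := bruhatLT_length_lt cs hytx
  have key := Statement0Aux.closure_eq_of_diamond cs (cs.length x) z y ytilde x ra rb rc rd rfl
    hlen (by omega) (by omega) hne hra hrb hrc hrd hz1 hx1 hz2 hx2
  constructor
  · rw [key]
    exact Subgroup.subset_closure (Set.mem_insert _ _)
  · rw [key]
    exact Subgroup.subset_closure (Set.mem_insert_of_mem _ rfl)
end

section
/- Any length-two Bruhat interval [z,x] in a Coxeter group contains exactly two elements y with z < y < x. -/
open Relation

variable {B : Type*}

namespace BruhatAux

open List CoxeterSystem

open scoped Classical

variable {B : Type*} {W : Type*} [Group W] {M : CoxeterMatrix B} (cs : CoxeterSystem M W)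

local prefix:100 "s" => cs.simple
local prefix:100 "π" => cs.wordProd
local prefix:100 "ℓ" => cs.length
local prefix:100 "ris" => cs.rightInvSeq

noncomputable def pFun (i : B) : W × ZMod 2 → W × ZMod 2 :=
  fun x => (s i * x.1 * s i, x.2 + if x.1 = s i then 1 else 0)

lemma simple_conj_eq_iff (i : B) (a b : W) : s i * a * s i = b ↔ a = s i * b * s i := by
  constructor
  · rintro rfl
    rw [← mul_assoc, ← mul_assoc, cs.simple_mul_simple_self, one_mul, mul_assoc,
      cs.simple_mul_simple_self, mul_one]
  · rintro rfl
    rw [← mul_assoc, ← mul_assoc, cs.simple_mul_simple_self, one_mul, mul_assoc,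
      cs.simple_mul_simple_self, mul_one]

lemma pFun_involutive (i : B) : Function.Involutive (pFun cs i) := by
  intro x
  simp only [pFun]
  have h1 : s i * (s i * x.1 * s i) * s i = x.1 := by
    rw [simple_conj_eq_iff cs]
  have h2 : (s i * x.1 * s i = s i) ↔ (x.1 = s i) := by
    rw [simple_conj_eq_iff cs, cs.simple_mul_simple_self, one_mul]
  refine Prod.ext h1 ?_
  show x.2 + _ + _ = x.2
  simp only [h2]
  by_cases h : x.1 = s i
  · simp only [h, if_pos]
    have : (1 + 1 : ZMod 2) = 0 := by decide
    rw [add_assoc, this, add_zero]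
  · simp [h]

noncomputable def pPerm (i : B) : Equiv.Perm (W × ZMod 2) :=
  Function.Involutive.toPerm _ (pFun_involutive cs i)

lemma pPerm_apply (i : B) (x : W × ZMod 2) :
    pPerm cs i x = (s i * x.1 * s i, x.2 + if x.1 = s i then 1 else 0) := rfl

lemma conj_eq_iff (g a b : W) : g * a * g⁻¹ = b ↔ a = g⁻¹ * b * g := by
  constructor
  · rintro rfl; group
  · rintro rfl; group

lemma sj_mul_c (i j : B) : s j * (s i * s j) = (s i * s j)⁻¹ * s j := by
  rw [mul_inv_rev, cs.inv_simple, cs.inv_simple, ← mul_assoc]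

lemma c_conj_key (i j : B) (r : ℕ) :
    (s i * s j)⁻¹ * (((s i * s j)⁻¹) ^ r * s j) * (s i * s j)
      = ((s i * s j)⁻¹) ^ (r + 2) * s j := by
  rw [pow_succ ((s i * s j)⁻¹) (r + 1), pow_succ' ((s i * s j)⁻¹) r]
  simp only [mul_assoc]
  rw [sj_mul_c cs i j]

lemma c_conj_iff (i j : B) (r : ℕ) (a : W) :
    s i * s j * a * (s i * s j)⁻¹ = ((s i * s j)⁻¹) ^ r * s j ↔
      a = ((s i * s j)⁻¹) ^ (r + 2) * s j := by
  rw [conj_eq_iff, c_conj_key cs i j r]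

lemma pPerm_mul_pow_apply (i j : B) (k : ℕ) (x : W × ZMod 2) :
    ((pPerm cs i * pPerm cs j) ^ k) x =
      ((s i * s j) ^ k * x.1 * ((s i * s j) ^ k)⁻¹,
        x.2 + ∑ r ∈ Finset.range (2 * k),
          if x.1 = ((s i * s j)⁻¹) ^ r * s j then 1 else 0) := by
  induction k generalizing x with
  | zero => simp
  | succ k ih =>
    rw [pow_succ, Equiv.Perm.mul_apply, Equiv.Perm.mul_apply, pPerm_apply, pPerm_apply, ih]
    have hconj : s i * (s j * x.1 * s j) * s i = (s i * s j) * x.1 * (s i * s j)⁻¹ := by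
      rw [mul_inv_rev, cs.inv_simple, cs.inv_simple]; group
    have hfst : (s i * s j) ^ k * (s i * (s j * x.1 * s j) * s i) * ((s i * s j) ^ k)⁻¹
        = (s i * s j) ^ (k + 1) * x.1 * ((s i * s j) ^ (k + 1))⁻¹ := by
      rw [hconj, pow_succ (s i * s j) k, mul_inv_rev ((s i * s j) ^ k) (s i * s j)]
      simp only [mul_assoc]
    refine Prod.ext hfst ?_
    show x.2 + _ + _ + _ = x.2 + _
    have e0 : (x.1 = s j) ↔ (x.1 = ((s i * s j)⁻¹) ^ 0 * s j) := by
      rw [pow_zero, one_mul]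
    have e1 : (s j * x.1 * s j = s i) ↔ (x.1 = ((s i * s j)⁻¹) ^ 1 * s j) := by
      rw [pow_one, mul_inv_rev, cs.inv_simple, cs.inv_simple, simple_conj_eq_iff cs, mul_assoc]
    have e2 : ∀ r : ℕ, (s i * (s j * x.1 * s j) * s i = ((s i * s j)⁻¹) ^ r * s j)
        ↔ (x.1 = ((s i * s j)⁻¹) ^ (r + 2) * s j) := by
      intro r
      rw [hconj, c_conj_iff cs i j r x.1]
    have h2 : (2 * (k + 1)) = (2 * k + 1) + 1 := by ring
    rw [h2, Finset.sum_range_succ', Finset.sum_range_succ']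
    simp only [e0, e1, e2, zero_add]
    try ring

lemma zmod2_add_self : ∀ a : ZMod 2, a + a = 0 := by decide

lemma pPerm_liftable : M.IsLiftable (pPerm cs) := by
  intro i j
  apply Equiv.ext
  intro x
  rw [pPerm_mul_pow_apply]
  have hc : (s i * s j) ^ M.M i j = 1 := cs.simple_mul_simple_pow i j
  have hfst : (s i * s j) ^ M.M i j * x.1 * ((s i * s j) ^ M.M i j)⁻¹ = x.1 := by
    rw [hc]; group
  have hsum : ∑ r ∈ Finset.range (2 * M.M i j),
      (if x.1 = ((s i * s j)⁻¹) ^ r * s j then (1 : ZMod 2) else 0) = 0 := by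
    have h2 : 2 * M.M i j = M.M i j + M.M i j := by ring
    rw [h2, Finset.sum_range_add]
    have he : ∀ r : ℕ, ((s i * s j)⁻¹) ^ (M.M i j + r) = ((s i * s j)⁻¹) ^ r := by
      intro r
      rw [pow_add, inv_pow, hc, inv_one, one_mul]
    simp only [he]
    exact zmod2_add_self _
  rw [hfst, hsum, add_zero]
  rfl

noncomputable def refPerm : W →* Equiv.Perm (W × ZMod 2) :=
  cs.lift ⟨pPerm cs, pPerm_liftable cs⟩

lemma refPerm_simple (i : B) : refPerm cs (s i) = pPerm cs i :=
  cs.lift_apply_simple (pPerm_liftable cs) i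

lemma refPerm_wordProd (ω : List B) (x : W × ZMod 2) :
    refPerm cs (π ω) x = (π ω * x.1 * (π ω)⁻¹,
      x.2 + ((ris ω).map (fun t => if x.1 = t then (1 : ZMod 2) else 0)).sum) := by
  induction ω generalizing x with
  | nil => simp
  | cons i ω ih =>
    rw [cs.wordProd_cons, map_mul, Equiv.Perm.mul_apply, ih, refPerm_simple, pPerm_apply]
    have hris : ris (i :: ω) = (π ω)⁻¹ * s i * π ω :: ris ω := rfl
    rw [hris]
    refine Prod.ext ?_ ?_
    · show s i * (π ω * x.1 * (π ω)⁻¹) * s i = (s i * π ω) * x.1 * (s i * π ω)⁻¹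
      rw [mul_inv_rev (s i) (π ω), cs.inv_simple]
      simp only [mul_assoc]
    · show x.2 + _ + _ = x.2 + _
      rw [List.map_cons, List.sum_cons]
      have hiff : (π ω * x.1 * (π ω)⁻¹ = s i) ↔ (x.1 = (π ω)⁻¹ * s i * π ω) :=
        conj_eq_iff (π ω) x.1 (s i)
      simp only [hiff]
      ring

noncomputable def eta (w t : W) : ZMod 2 := (refPerm cs w (t, 0)).2

lemma refPerm_apply (w : W) (x : W × ZMod 2) :
    refPerm cs w x = (w * x.1 * w⁻¹, x.2 + eta cs w x.1) := by
  rcases cs.wordProd_surjective w with ⟨ω, rfl⟩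
  rw [refPerm_wordProd]
  unfold eta
  rw [refPerm_wordProd]
  simp

lemma eta_one (t : W) : eta cs 1 t = 0 := by
  unfold eta
  rw [map_one]
  rfl

lemma eta_cocycle (a b t : W) :
    eta cs (a * b) t = eta cs b t + eta cs a (b * t * b⁻¹) := by
  have h1 : refPerm cs b (t, 0) = (b * t * b⁻¹, 0 + eta cs b t) := refPerm_apply cs b (t, 0)
  have h2 : refPerm cs a (b * t * b⁻¹, 0 + eta cs b t)
      = (a * (b * t * b⁻¹) * a⁻¹, (0 + eta cs b t) + eta cs a (b * t * b⁻¹)) :=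
    refPerm_apply cs a _
  show (refPerm cs (a * b) (t, 0)).2 = _
  rw [map_mul, Equiv.Perm.mul_apply, h1, h2]
  show 0 + eta cs b t + eta cs a (b * t * b⁻¹) = _
  rw [zero_add]

lemma eta_inv_conj (a v : W) : eta cs a⁻¹ (a * v * a⁻¹) = eta cs a v := by
  have h := eta_cocycle cs a⁻¹ a v
  rw [inv_mul_cancel, eta_one] at h
  have hneg : ∀ x y : ZMod 2, 0 = x + y → y = x := by decide
  exact hneg _ _ h

lemma eta_simple_self (i : B) : eta cs (s i) (s i) = 1 := by
  unfold eta
  rw [refPerm_simple, pPerm_apply]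
  simp

lemma eta_refl_self (t : W) (ht : cs.IsReflection t) : eta cs t t = 1 := by
  obtain ⟨u, i, rfl⟩ := ht
  have hbt : u⁻¹ * (u * s i * u⁻¹) * (u⁻¹)⁻¹ = s i := by group
  have hc1 : eta cs (u * s i * u⁻¹) (u * s i * u⁻¹)
      = eta cs u⁻¹ (u * s i * u⁻¹)
        + eta cs (u * s i) (u⁻¹ * (u * s i * u⁻¹) * (u⁻¹)⁻¹) :=
    eta_cocycle cs (u * s i) u⁻¹ (u * s i * u⁻¹)
  rw [hbt] at hc1
  have hc2 : eta cs (u * s i) (s i) = eta cs (s i) (s i) + eta cs u (s i * s i * (s i)⁻¹) :=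
    eta_cocycle cs u (s i) (s i)
  rw [cs.simple_mul_simple_self, one_mul, cs.inv_simple, eta_simple_self] at hc2
  have hc3 : eta cs u⁻¹ (u * s i * u⁻¹) = eta cs u (s i) := eta_inv_conj cs u (s i)
  rw [hc1, hc2, hc3]
  have : ∀ x : ZMod 2, x + (1 + x) = 1 := by decide
  exact this _

lemma mem_rightInvSeq_of_eta_one (ω : List B) (t : W) (h : eta cs (π ω) t = 1) :
    t ∈ ris ω := by
  by_contra hmem
  have : eta cs (π ω) t = 0 := by
    unfold eta
    rw [refPerm_wordProd]
    have : ((ris ω).map (fun t' => if t = t' then (1 : ZMod 2) else 0)).sum = 0 := by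
      apply List.sum_eq_zero
      intro x hx
      rcases List.mem_map.mp hx with ⟨t', ht', rfl⟩
      have : t ≠ t' := fun hc => hmem (hc ▸ ht')
      simp [this]
    simp [this]
  rw [this] at h
  exact absurd h (by decide)

theorem strong_exchange (ω : List B) (t : W) (ht : cs.IsReflection t)
    (hl : ℓ (π ω * t) < ℓ (π ω)) :
    ∃ j, ∃ hj : j < ω.length, π ω * t = π (ω.eraseIdx j) := by
  have heta : eta cs (π ω) t = 1 := by
    by_contra h0
    have h0' : eta cs (π ω) t = 0 := by
      rcases (by decide : ∀ x : ZMod 2, x = 0 ∨ x = 1) (eta cs (π ω) t) with h | h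
      · exact h
      · exact absurd h h0
    have hwt : eta cs (π ω * t) t = 1 := by
      rw [eta_cocycle cs (π ω) t t, ht.mul_self, one_mul, ht.inv, eta_refl_self cs t ht, h0']
      decide
    obtain ⟨γ, hγred, hγ⟩ := cs.exists_reduced_word' (π ω * t)
    rw [hγ] at hwt
    have hmem := mem_rightInvSeq_of_eta_one cs γ t hwt
    obtain ⟨j, hj', hjt⟩ := List.getElem_of_mem hmem
    have hj : j < γ.length := by simpa using hj'
    have hgetD : (ris γ).getD j 1 = t := by
      rw [List.getD_eq_getElem _ 1 hj', hjt]
    have herase := cs.wordProd_mul_getD_rightInvSeq γ j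
    rw [hgetD] at herase
    have hback : π γ * t = π ω := by
      rw [← hγ, mul_assoc, ht.mul_self, mul_one]
    rw [hback] at herase
    have hlen : ℓ (π ω) ≤ (γ.eraseIdx j).length := herase ▸ cs.length_wordProd_le _
    have hlen2 : (γ.eraseIdx j).length + 1 = γ.length := List.length_eraseIdx_add_one hj
    have hlen3 : ℓ (π γ) = γ.length := hγred
    rw [← hγ] at hlen3
    omega
  have hmem := mem_rightInvSeq_of_eta_one cs ω t heta
  obtain ⟨j, hj', hjt⟩ := List.getElem_of_mem hmem
  have hj : j < ω.length := by simpa using hj'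
  refine ⟨j, hj, ?_⟩
  have hgetD : (ris ω).getD j 1 = t := by
    rw [List.getD_eq_getElem _ 1 hj', hjt]
  have := cs.wordProd_mul_getD_rightInvSeq ω j
  rw [hgetD] at this
  exact this

lemma isReduced_nil : cs.IsReduced ([] : List B) := by
  simp [CoxeterSystem.IsReduced]

theorem exists_reduced_sublist :
    ∀ (n : ℕ) (ω : List B), ω.length ≤ n →
      ∃ ω', ω' <+ ω ∧ cs.IsReduced ω' ∧ π ω' = π ω := by
  intro n
  induction n with
  | zero =>
    intro ω hω
    have : ω = [] := List.length_eq_zero_iff.mp (Nat.le_zero.mp hω)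
    subst this
    exact ⟨[], List.Sublist.refl _, isReduced_nil cs, rfl⟩
  | succ n ih =>
    intro ω hω
    by_cases hred : cs.IsReduced ω
    · exact ⟨ω, List.Sublist.refl _, hred, rfl⟩
    · have hne : ω ≠ [] := by
        rintro rfl
        exact hred (isReduced_nil cs)
      have hpos : 0 < ω.length := List.length_pos_iff.mpr hne
      haveI : DecidablePred (fun k => ¬cs.IsReduced (ω.take (k + 1))) := Classical.decPred _
      have hP : ∃ k, ¬cs.IsReduced (ω.take (k + 1)) := by
        refine ⟨ω.length - 1, ?_⟩
        rwa [Nat.sub_add_cancel hpos, List.take_length]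
      set k := Nat.find hP with hkdef
      have hk : ¬cs.IsReduced (ω.take (k + 1)) := Nat.find_spec hP
      have hmin : ∀ m, m < k → cs.IsReduced (ω.take (m + 1)) := by
        intro m hm
        by_contra hc
        have h1 : Nat.find hP ≤ m := Nat.find_le hc
        rw [← hkdef] at h1
        omega
      have hklt : k < ω.length := by
        have h1 : ¬cs.IsReduced (ω.take ((ω.length - 1) + 1)) := by
          rwa [Nat.sub_add_cancel hpos, List.take_length]
        have h2 : Nat.find hP ≤ ω.length - 1 := Nat.find_le h1
        rw [← hkdef] at h2
        omega
      have htk : cs.IsReduced (ω.take k) := by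
        match hk' : k with
        | 0 => simpa using isReduced_nil cs
        | m + 1 => exact (by simpa using hmin m (by omega))
      have hsplit : ω.take (k + 1) = ω.take k ++ [ω[k]] := by
        rw [List.take_succ, List.getElem?_eq_getElem hklt]
        rfl
      have hprod : π (ω.take (k + 1)) = π (ω.take k) * s (ω[k]) := by
        rw [hsplit, cs.wordProd_append, cs.wordProd_singleton]
      have hlentake : (ω.take k).length = k := by
        rw [List.length_take]
        omega
      have hlenk : ℓ (π (ω.take k)) = k := by rw [htk, hlentake]
      have hdesc : ℓ (π (ω.take k) * s (ω[k])) < ℓ (π (ω.take k)) := by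
        rcases cs.length_mul_simple (π (ω.take k)) (ω[k]) with h | h
        · exfalso
          apply hk
          show ℓ (π (ω.take (k + 1))) = (ω.take (k + 1)).length
          rw [hprod, h, hlenk, List.length_take]
          omega
        · omega
      obtain ⟨j, hj, herase⟩ := strong_exchange cs (ω.take k) (s (ω[k]))
        (cs.isReflection_simple _) hdesc
      set ω₁ := (ω.take k).eraseIdx j ++ ω.drop (k + 1) with hω₁
      have hprod1 : π ω₁ = π ω := by
        conv_rhs => rw [← List.take_append_drop (k + 1) ω]
        rw [hω₁, cs.wordProd_append, cs.wordProd_append, ← herase, ← hprod]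
      have hsub1 : ω₁ <+ ω := by
        have h1 : (ω.take k).eraseIdx j <+ ω.take k := List.eraseIdx_sublist _ j
        have h2 : ω.take k <+ ω.take (k + 1) := by
          rw [hsplit]
          exact List.sublist_append_left _ _
        have h3 : ω₁ <+ ω.take (k + 1) ++ ω.drop (k + 1) :=
          List.Sublist.append (h1.trans h2) (List.Sublist.refl _)
        rwa [List.take_append_drop] at h3
      have hlen1 : ω₁.length ≤ n := by
        have hje : ((ω.take k).eraseIdx j).length + 1 = (ω.take k).length :=
          List.length_eraseIdx_add_one hj
        have : ω₁.length = ((ω.take k).eraseIdx j).length + (ω.drop (k + 1)).length :=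
          List.length_append
        rw [List.length_drop] at this
        omega
      obtain ⟨ω', hsub', hred', hprod'⟩ := ih ω₁ hlen1
      exact ⟨ω', hsub'.trans hsub1, hred', hprod'.trans hprod1⟩

lemma step_length_lt {a b : W} (h : BruhatStep cs a b) : ℓ a < ℓ b := by
  obtain ⟨t, _, _, hl⟩ := h
  exact hl

lemma le_length_le {a b : W} (h : BruhatLE cs a b) : ℓ a ≤ ℓ b := by
  induction h with
  | refl => exact le_refl _
  | tail _ hstep ih => exact ih.trans (step_length_lt cs hstep).le

lemma eq_of_le_of_length_le {a b : W} (h : BruhatLE cs a b) (hl : ℓ b ≤ ℓ a) : a = b := by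
  rcases Relation.ReflTransGen.cases_head h with rfl | ⟨c, hac, hcb⟩
  · rfl
  · have h1 := step_length_lt cs hac
    have h2 := le_length_le cs hcb
    omega

lemma lt_of_le_of_length_lt {a b : W} (h : BruhatLE cs a b) (hl : ℓ a < ℓ b) :
    BruhatLT cs a b :=
  ⟨h, fun hc => by rw [hc] at hl; omega⟩

lemma lt_length_lt {a b : W} (h : BruhatLT cs a b) : ℓ a < ℓ b := by
  obtain ⟨hle, hne⟩ := h
  have := le_length_le cs hle
  rcases Nat.lt_or_ge (ℓ a) (ℓ b) with h1 | h1
  · exact h1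
  · exact absurd (eq_of_le_of_length_le cs hle (by omega)) hne

lemma step_of_le_of_length_le {a b : W} (h : BruhatLE cs a b) (hl : ℓ b ≤ ℓ a + 1)
    (hne : a ≠ b) : BruhatStep cs a b := by
  rcases Relation.ReflTransGen.cases_head h with rfl | ⟨c, hac, hcb⟩
  · exact absurd rfl hne
  · have h1 := step_length_lt cs hac
    have h2 := le_length_le cs hcb
    have : c = b := eq_of_le_of_length_le cs hcb (by omega)
    rwa [← this]

lemma step_simple_right {a : W} (i : B) (h : ℓ a < ℓ (a * s i)) :
    BruhatStep cs a (a * s i) :=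
  ⟨s i, cs.isReflection_simple i, rfl, h⟩

lemma le_of_step {a b : W} (h : BruhatStep cs a b) : BruhatLE cs a b :=
  Relation.ReflTransGen.single h

theorem le_subword {z x : W} (h : BruhatLE cs z x) :
    ∀ ω : List B, cs.IsReduced ω → π ω = x →
      ∃ ω', ω' <+ ω ∧ cs.IsReduced ω' ∧ π ω' = z := by
  induction h with
  | refl => exact fun ω hred hprod => ⟨ω, List.Sublist.refl _, hred, hprod⟩
  | @tail b c hzb hstep ih =>
    intro ω hred hprod
    obtain ⟨t, ht, hbc, hlt⟩ := hstep
    have hb : π ω * t = b := by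
      rw [hprod, hbc, mul_assoc, ht.mul_self, mul_one]
    have hlt' : ℓ (π ω * t) < ℓ (π ω) := by
      rw [hb, hprod]
      exact hlt
    obtain ⟨j, hj, herase⟩ := strong_exchange cs ω t ht hlt'
    obtain ⟨α, hαsub, hαred, hαprod⟩ :=
      exists_reduced_sublist cs (ω.eraseIdx j).length (ω.eraseIdx j) (le_refl _)
    obtain ⟨ω', hsub', hred', hprod'⟩ := ih α hαred (by rw [hαprod, ← herase, hb])
    exact ⟨ω', hsub'.trans (hαsub.trans (List.eraseIdx_sublist _ _)), hred', hprod'⟩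

lemma sublist_concat_cases {ω' α : List B} {i : B} (h : ω' <+ α ++ [i]) :
    ω' <+ α ∨ ∃ β, β <+ α ∧ ω' = β ++ [i] := by
  have h1 : ω'.reverse <+ i :: α.reverse := by
    have := h.reverse
    simpa using this
  rcases List.sublist_cons_iff.mp h1 with h2 | ⟨r, hr, hsub⟩
  · left
    have := h2.reverse
    simpa using this
  · right
    refine ⟨r.reverse, by simpa using hsub.reverse, ?_⟩
    have := congrArg List.reverse hr
    simpa using this

def ZP (n : ℕ) : Prop :=
  ∀ u w : W, ∀ i : B, ℓ w ≤ n → BruhatLE cs u w → ℓ (w * s i) < ℓ w →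
    BruhatLE cs (u * s i) w

lemma Zstep {a b : W} (i : B) (h : BruhatStep cs a b) (hb : ℓ b < ℓ (b * s i)) :
    BruhatLE cs (a * s i) (b * s i) := by
  obtain ⟨t, ht, rfl, hlt⟩ := h
  rcases cs.length_mul_simple a i with hcase | hcase
  · apply le_of_step
    have hrefl : cs.IsReflection (s i * t * s i) := by
      have := ht.conj (s i)
      rwa [cs.inv_simple] at this
    refine ⟨s i * t * s i, hrefl, ?_, ?_⟩
    · symm
      simp only [← mul_assoc, cs.simple_mul_simple_cancel_right]
    · omega
  · have h1 : BruhatStep cs (a * s i) a := by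
      refine ⟨s i, cs.isReflection_simple i, (cs.simple_mul_simple_cancel_right i).symm, by omega⟩
    have h2 : BruhatStep cs a (a * t) := ⟨t, ht, rfl, hlt⟩
    have h3 : BruhatStep cs (a * t) (a * t * s i) := step_simple_right cs i hb
    exact ((le_of_step cs h1).trans (le_of_step cs h2)).trans (le_of_step cs h3)

lemma Zmove (n : ℕ) (hZ : ZP cs n) {u w : W} (i : B) (h : BruhatLE cs u w) :
    ℓ w ≤ n + 1 → ℓ w < ℓ (w * s i) → BruhatLE cs (u * s i) (w * s i) := by
  induction h with
  | refl => intro _ _; exact Relation.ReflTransGen.refl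
  | @tail b c hub hstep ih =>
    intro hw hup
    have hbc := step_length_lt cs hstep
    rcases cs.length_mul_simple b i with hcase | hcase
    · have h1 : BruhatLE cs (u * s i) (b * s i) := ih (by omega) (by omega)
      exact h1.trans (Zstep cs i hstep hup)
    · have h1 : BruhatLE cs (u * s i) b := hZ u b i (by omega) hub (by omega)
      have h2 : BruhatStep cs c (c * s i) := step_simple_right cs i hup
      exact (h1.trans (le_of_step cs hstep)).trans (le_of_step cs h2)

lemma SubP (n : ℕ) (hZ : ZP cs n) :
    ∀ m : ℕ, ∀ ω : List B, ω.length = m → m ≤ n + 2 → cs.IsReduced ω →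
      ∀ ω', ω' <+ ω → cs.IsReduced ω' → BruhatLE cs (π ω') (π ω) := by
  intro m
  induction m using Nat.strong_induction_on with
  | _ m ih =>
    intro ω hlen hm hred ω' hsub hred'
    rcases List.eq_nil_or_concat ω with rfl | ⟨α, i, rfl⟩
    · have : ω' = [] := List.sublist_nil.mp hsub
      subst this
      exact Relation.ReflTransGen.refl
    · simp only [List.concat_eq_append] at hsub hred hlen ⊢
      have hαred : cs.IsReduced α := by
        have := hred.take α.length
        rwa [List.take_left] at this
      have hαlen : ℓ (π α) = α.length := hαred
      have hωlen : ℓ (π (α ++ [i])) = α.length + 1 := by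
        have := hred
        unfold CoxeterSystem.IsReduced at this
        rwa [List.length_append, List.length_singleton] at this
      have hprod : π (α ++ [i]) = π α * s i := by
        rw [cs.wordProd_append, cs.wordProd_singleton]
      have hmlen : m = α.length + 1 := by
        rw [← hlen, List.length_append, List.length_singleton]
      have hstep_top : BruhatStep cs (π α) (π (α ++ [i])) := by
        refine ⟨s i, cs.isReflection_simple i, hprod, by omega⟩
      rcases sublist_concat_cases hsub with hcase | ⟨β, hβsub, rfl⟩
      · have h1 := ih α.length (by omega) α rfl (by omega) hαred ω' hcase hred'
        exact h1.trans (le_of_step cs hstep_top)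
      · have hβred : cs.IsReduced β := by
          have := hred'.take β.length
          rwa [List.take_left] at this
        have h1 := ih α.length (by omega) α rfl (by omega) hαred β hβsub hβred
        have h2 : BruhatLE cs (π β * s i) (π α * s i) :=
          Zmove cs n hZ i h1 (by omega) (by rw [← hprod]; omega)
        rw [cs.wordProd_append, cs.wordProd_singleton, hprod]
        exact h2

lemma ZP_zero : ZP cs 0 := by
  intro u w i hw hle hdesc
  omega

lemma ZP_succ (n : ℕ) (hZ : ZP cs n) : ZP cs (n + 1) := by
  intro u w i hw hle hdesc
  rcases cs.length_mul_simple u i with hu | hu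
  · -- ℓ (u * s i) = ℓ u + 1
    obtain ⟨γ, hγred, hγ⟩ := cs.exists_reduced_word' (w * s i)
    have hwdesc : ℓ (w * s i) + 1 = ℓ w := by
      rcases cs.length_mul_simple w i with h | h <;> omega
    have hγlen : γ.length = ℓ w - 1 := by
      have : ℓ (π γ) = γ.length := hγred
      rw [← hγ] at this
      omega
    have hω : π (γ ++ [i]) = w := by
      rw [cs.wordProd_append, cs.wordProd_singleton, ← hγ,
        cs.simple_mul_simple_cancel_right]
    have hωred : cs.IsReduced (γ ++ [i]) := by
      show ℓ (π (γ ++ [i])) = _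
      rw [hω, List.length_append, List.length_singleton]
      omega
    obtain ⟨ω', hsub, hred', hprod'⟩ := le_subword cs hle (γ ++ [i]) hωred hω
    rcases sublist_concat_cases hsub with hc | ⟨β, hβ, rfl⟩
    · have hred'' : cs.IsReduced (ω' ++ [i]) := by
        show ℓ (π (ω' ++ [i])) = _
        rw [cs.wordProd_append, cs.wordProd_singleton, hprod',
          List.length_append, List.length_singleton]
        have : ℓ (π ω') = ω'.length := hred'
        rw [hprod'] at this
        omega
      have hsub' : ω' ++ [i] <+ γ ++ [i] := hc.append (List.Sublist.refl _)
      have := SubP cs n hZ (γ ++ [i]).length (γ ++ [i]) rfl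
        (by rw [List.length_append, List.length_singleton]; omega) hωred
        (ω' ++ [i]) hsub' hred''
      rw [hω, cs.wordProd_append, cs.wordProd_singleton, hprod'] at this
      exact this
    · exfalso
      have hβred : cs.IsReduced β := by
        have := hred'.take β.length
        rwa [List.take_left] at this
      have hβprod : π β = u * s i := by
        rw [cs.wordProd_append, cs.wordProd_singleton] at hprod'
        rw [← hprod', cs.simple_mul_simple_cancel_right]
      have h1 : ℓ (π (β ++ [i])) = β.length + 1 := by
        rw [(hred' : ℓ (π (β ++ [i])) = _), List.length_append, List.length_singleton]
      have h2 : ℓ (π β) = β.length := hβred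
      rw [hβprod] at h2
      rw [hprod'] at h1
      -- h1 : ℓ u = β.length + 1, h2 : ℓ (u * s i) = β.length, hu : ℓ (u * s i) = ℓ u + 1
      omega
  · -- ℓ (u * s i) + 1 = ℓ u : descent of u
    have h1 : BruhatStep cs (u * s i) u :=
      ⟨s i, cs.isReflection_simple i, (cs.simple_mul_simple_cancel_right i).symm, by omega⟩
    exact (le_of_step cs h1).trans hle

lemma ZP_all (n : ℕ) : ZP cs n := by
  induction n with
  | zero => exact ZP_zero cs
  | succ n ih => exact ZP_succ cs n ih

lemma bruhat_Z' {u w : W} (i : B) (h : BruhatLE cs u w) (hd : ℓ (w * s i) < ℓ w) :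
    BruhatLE cs (u * s i) w :=
  ZP_all cs (ℓ w) u w i le_rfl h hd

lemma bruhat_Z {u w : W} (i : B) (h : BruhatLE cs u w) (hd : ℓ w < ℓ (w * s i)) :
    BruhatLE cs (u * s i) (w * s i) :=
  Zmove cs (ℓ w) (ZP_all cs (ℓ w)) i h (by omega) hd

lemma bruhat_sub {ω ω' : List B} (hred : cs.IsReduced ω) (hsub : ω' <+ ω)
    (hred' : cs.IsReduced ω') : BruhatLE cs (π ω') (π ω) :=
  SubP cs ω.length (ZP_all cs ω.length) ω.length ω rfl (by omega) hred ω' hsub hred'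

lemma mul_simple_cancel {a b : W} (i : B) (h : a * s i = b * s i) : a = b := by
  have := congrArg (fun w => w * s i) h
  simpa only [cs.simple_mul_simple_cancel_right] using this

lemma descent_word (x : W) (i : B) (hx : ℓ (x * s i) < ℓ x) :
    ∃ γ : List B, cs.IsReduced γ ∧ π γ = x * s i ∧ cs.IsReduced (γ ++ [i]) ∧
      π (γ ++ [i]) = x ∧ γ.length + 1 = ℓ x := by
  obtain ⟨γ, hγred, hγ⟩ := cs.exists_reduced_word' (x * s i)
  have hxdesc : ℓ (x * s i) + 1 = ℓ x := by
    rcases cs.length_mul_simple x i with h | h <;> omega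
  have hγlen : γ.length = ℓ x - 1 := by
    have : ℓ (π γ) = γ.length := hγred
    rw [← hγ] at this
    omega
  have hω : π (γ ++ [i]) = x := by
    rw [cs.wordProd_append, cs.wordProd_singleton, ← hγ, cs.simple_mul_simple_cancel_right]
  refine ⟨γ, hγred, hγ.symm, ?_, hω, by omega⟩
  show ℓ (π (γ ++ [i])) = _
  rw [hω, List.length_append, List.length_singleton]
  omega

lemma lifting_b {z x : W} {i : B} (hx : ℓ (x * s i) < ℓ x) (hle : BruhatLE cs z x)
    (hz : ℓ (z * s i) < ℓ z) : BruhatLE cs (z * s i) (x * s i) := by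
  obtain ⟨γ, hγred, hγprod, hωred, hωprod, hγlen⟩ := descent_word cs x i hx
  obtain ⟨ω', hsub, hred', hprod'⟩ := le_subword cs hle (γ ++ [i]) hωred hωprod
  rcases sublist_concat_cases hsub with hc | ⟨β, hβ, rfl⟩
  · have h1 : BruhatLE cs z (x * s i) := by
      have := bruhat_sub cs hγred hc hred'
      rwa [hprod', hγprod] at this
    have h2 : BruhatStep cs (z * s i) z :=
      ⟨s i, cs.isReflection_simple i, (cs.simple_mul_simple_cancel_right i).symm, by omega⟩
    exact (le_of_step cs h2).trans h1
  · have hβred : cs.IsReduced β := by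
      have := hred'.take β.length
      rwa [List.take_left] at this
    have hβprod : π β = z * s i := by
      rw [cs.wordProd_append, cs.wordProd_singleton] at hprod'
      rw [← hprod', cs.simple_mul_simple_cancel_right]
    have := bruhat_sub cs hγred hβ hβred
    rwa [hβprod, hγprod] at this

lemma lifting_c {z x : W} {i : B} (hx : ℓ (x * s i) < ℓ x) (hle : BruhatLE cs z x)
    (hz : ℓ z < ℓ (z * s i)) : BruhatLE cs z (x * s i) := by
  obtain ⟨γ, hγred, hγprod, hωred, hωprod, hγlen⟩ := descent_word cs x i hx
  obtain ⟨ω', hsub, hred', hprod'⟩ := le_subword cs hle (γ ++ [i]) hωred hωprod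
  rcases sublist_concat_cases hsub with hc | ⟨β, hβ, rfl⟩
  · have := bruhat_sub cs hγred hc hred'
    rwa [hprod', hγprod] at this
  · exfalso
    have hβred : cs.IsReduced β := by
      have := hred'.take β.length
      rwa [List.take_left] at this
    have hβprod : π β = z * s i := by
      rw [cs.wordProd_append, cs.wordProd_singleton] at hprod'
      rw [← hprod', cs.simple_mul_simple_cancel_right]
    have h1 : ℓ (π (β ++ [i])) = β.length + 1 := by
      rw [(hred' : ℓ (π (β ++ [i])) = _), List.length_append, List.length_singleton]
    have h2 : ℓ (π β) = β.length := hβred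
    rw [hβprod] at h2
    rw [hprod'] at h1
    omega

theorem diamond : ∀ n : ℕ, ∀ x z : W, ℓ x = n → BruhatLE cs z x → ℓ x = ℓ z + 2 →
    ∃ y₁ y₂ : W, y₁ ≠ y₂ ∧
      ∀ y, (BruhatStep cs z y ∧ BruhatStep cs y x) ↔ (y = y₁ ∨ y = y₂) := by
  intro n
  induction n using Nat.strong_induction_on with
  | _ n ih =>
    intro x z hn hle hlen
    have hx1 : x ≠ 1 := by
      intro h
      rw [h, cs.length_one] at hlen
      omega
    obtain ⟨i, hdesc'⟩ := cs.exists_rightDescent_of_ne_one hx1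
    have hdesc : ℓ (x * s i) < ℓ x := hdesc'
    have hxs : ℓ (x * s i) + 1 = ℓ x := by
      rcases cs.length_mul_simple x i with h | h <;> omega
    have hxx : x * s i * s i = x := cs.simple_mul_simple_cancel_right i
    rcases cs.length_mul_simple z i with hz | hz
    · -- CASE 1: ascent of z
      have hzxs : BruhatLE cs z (x * s i) := lifting_c cs hdesc hle (by omega)
      have hzs_x : BruhatLE cs (z * s i) x := by
        have := bruhat_Z cs i hzxs (by rw [hxx]; omega)
        rwa [hxx] at this
      refine ⟨z * s i, x * s i, ?_, ?_⟩
      · intro h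
        have : z = x := mul_simple_cancel cs i h
        rw [this] at hlen
        omega
      · intro y
        constructor
        · rintro ⟨hzy, hyx⟩
          have hly : ℓ y = ℓ z + 1 := by
            have := step_length_lt cs hzy
            have := step_length_lt cs hyx
            have hpar : ℓ y % 2 = (ℓ z + 1) % 2 := by
              obtain ⟨t, ht, rfl, _⟩ := hzy
              have := cs.length_mul_mod_two z t
              obtain ⟨m, hm⟩ := ht.odd_length
              omega
            omega
          rcases cs.length_mul_simple y i with hy | hy
          · right
            have h1 : BruhatLE cs y (x * s i) :=
              lifting_c cs hdesc (le_of_step cs hyx) (by omega)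
            exact eq_of_le_of_length_le cs h1 (by omega)
          · left
            have h1 : BruhatLE cs z (y * s i) :=
              lifting_c cs (show ℓ (y * s i) < ℓ y by omega) (le_of_step cs hzy) (by omega)
            have h2 : z = y * s i := eq_of_le_of_length_le cs h1 (by omega)
            rw [h2, cs.simple_mul_simple_cancel_right]
        · rintro (rfl | rfl)
          · refine ⟨step_simple_right cs i (by omega), ?_⟩
            refine step_of_le_of_length_le cs hzs_x (by omega) ?_
            intro h
            rw [← h] at hlen
            omega
          · refine ⟨?_, ⟨s i, cs.isReflection_simple i, hxx.symm, by omega⟩⟩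
            refine step_of_le_of_length_le cs hzxs (by omega) ?_
            intro h
            rw [h] at hlen
            omega
    · -- CASE 2: descent of z
      have hzs_desc : ℓ (z * s i) < ℓ z := by omega
      have hzz : z * s i * s i = z := cs.simple_mul_simple_cancel_right i
      have hb : BruhatLE cs (z * s i) (x * s i) := lifting_b cs hdesc hle hzs_desc
      obtain ⟨a₁, a₂, hane, hachar⟩ := ih (ℓ (x * s i)) (by omega) (x * s i) (z * s i)
        rfl hb (by omega)
      have hmid : ∀ a, a = a₁ ∨ a = a₂ →
          BruhatStep cs (z * s i) a ∧ BruhatStep cs a (x * s i) :=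
        fun a ha => (hachar a).mpr ha
      have hmidlen : ∀ a, BruhatStep cs (z * s i) a → BruhatStep cs a (x * s i) →
          ℓ a = ℓ z := by
        intro a h1 h2
        have := step_length_lt cs h1
        have := step_length_lt cs h2
        have hpar : ℓ a % 2 = (ℓ (z * s i) + 1) % 2 := by
          obtain ⟨t, ht, rfl, _⟩ := h1
          have := cs.length_mul_mod_two (z * s i) t
          obtain ⟨m, hm⟩ := ht.odd_length
          omega
        omega
      have hkey : ∀ a, BruhatStep cs (z * s i) a → BruhatStep cs a (x * s i) →
          ℓ (a * s i) < ℓ a → a = z := by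
        intro a h1 h2 hd
        have h3 : BruhatLE cs (z * s i * s i) a := bruhat_Z' cs i (le_of_step cs h1) hd
        rw [hzz] at h3
        have hal : ℓ a = ℓ z := hmidlen a h1 h2
        exact (eq_of_le_of_length_le cs h3 (by omega)).symm
      have hasc : ∀ a, BruhatStep cs (z * s i) a → BruhatStep cs a (x * s i) →
          a ≠ z → ℓ a < ℓ (a * s i) := by
        intro a h1 h2 hne
        rcases cs.length_mul_simple a i with h | h
        · omega
        · exact absurd (hkey a h1 h2 (by omega)) hne
      have hbuild : ∀ a, BruhatStep cs (z * s i) a → BruhatStep cs a (x * s i) →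
          ℓ a < ℓ (a * s i) →
          BruhatStep cs z (a * s i) ∧ BruhatStep cs (a * s i) x := by
        intro a h1 h2 hup
        have hal : ℓ a = ℓ z := hmidlen a h1 h2
        have halu : ℓ (a * s i) = ℓ a + 1 := by
          rcases cs.length_mul_simple a i with h | h <;> omega
        have hz_le : BruhatLE cs z (a * s i) := by
          have := bruhat_Z cs i (le_of_step cs h1) hup
          rwa [hzz] at this
        have ha_le : BruhatLE cs (a * s i) x := by
          have := bruhat_Z cs i (le_of_step cs h2) (by rw [hxx]; omega)
          rwa [hxx] at this
        constructor
        · refine step_of_le_of_length_le cs hz_le (by omega) ?_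
          intro h
          have := congrArg cs.length h
          omega
        · refine step_of_le_of_length_le cs ha_le (by omega) ?_
          intro h
          have := congrArg cs.length h
          omega
      have hdown : ∀ y, BruhatStep cs z y → BruhatStep cs y x → ℓ (y * s i) < ℓ y →
          BruhatStep cs (z * s i) (y * s i) ∧ BruhatStep cs (y * s i) (x * s i) := by
        intro y hzy hyx hyd
        have hly : ℓ y = ℓ z + 1 := by
          have := step_length_lt cs hzy
          have := step_length_lt cs hyx
          have hpar : ℓ y % 2 = (ℓ z + 1) % 2 := by
            obtain ⟨t, ht, rfl, _⟩ := hzy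
            have := cs.length_mul_mod_two z t
            obtain ⟨m, hm⟩ := ht.odd_length
            omega
          omega
        have hlyd : ℓ (y * s i) + 1 = ℓ y := by
          rcases cs.length_mul_simple y i with h | h <;> omega
        have h1 : BruhatLE cs (z * s i) (y * s i) :=
          lifting_b cs hyd (le_of_step cs hzy) hzs_desc
        have h2 : BruhatLE cs (y * s i) (x * s i) :=
          lifting_b cs hdesc (le_of_step cs hyx) hyd
        constructor
        · exact step_of_le_of_length_le cs h1 (by omega) (by intro h; rw [← h] at hlyd; omega)
        · exact step_of_le_of_length_le cs h2 (by omega) (by intro h; rw [h] at hlyd; omega)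
      by_cases hzxs : BruhatLE cs z (x * s i)
      · -- 2a : z is a middle of the small interval
        have hzmid : BruhatStep cs (z * s i) z ∧ BruhatStep cs z (x * s i) := by
          constructor
          · exact ⟨s i, cs.isReflection_simple i, hzz.symm, by omega⟩
          · exact step_of_le_of_length_le cs hzxs (by omega) (by intro h; rw [h] at hlen; omega)
        have hz12 : z = a₁ ∨ z = a₂ := (hachar z).mp hzmid
        obtain ⟨a, haor, hza⟩ : ∃ a, (a = a₁ ∨ a = a₂) ∧ a ≠ z := by
          rcases hz12 with h | h
          · exact ⟨a₂, Or.inr rfl, fun hc => hane (h.symm.trans hc.symm)⟩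
          · exact ⟨a₁, Or.inl rfl, fun hc => hane (hc.trans h)⟩
        obtain ⟨h1a, h2a⟩ := hmid a haor
        have hupa : ℓ a < ℓ (a * s i) := hasc a h1a h2a hza
        obtain ⟨hs1, hs2⟩ := hbuild a h1a h2a hupa
        have hal : ℓ a = ℓ z := hmidlen a h1a h2a
        refine ⟨x * s i, a * s i, ?_, ?_⟩
        · intro h
          have : x = a := mul_simple_cancel cs i h
          rw [← this] at hal
          omega
        · intro y
          constructor
          · rintro ⟨hzy, hyx⟩
            have hly : ℓ y = ℓ z + 1 := by
              have := step_length_lt cs hzy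
              have := step_length_lt cs hyx
              have hpar : ℓ y % 2 = (ℓ z + 1) % 2 := by
                obtain ⟨t, ht, rfl, _⟩ := hzy
                have := cs.length_mul_mod_two z t
                obtain ⟨m, hm⟩ := ht.odd_length
                omega
              omega
            rcases cs.length_mul_simple y i with hy | hy
            · left
              have h1 : BruhatLE cs y (x * s i) :=
                lifting_c cs hdesc (le_of_step cs hyx) (by omega)
              exact eq_of_le_of_length_le cs h1 (by omega)
            · right
              obtain ⟨hd1, hd2⟩ := hdown y hzy hyx (by omega)
              have hymid : y * s i = a₁ ∨ y * s i = a₂ := (hachar (y * s i)).mp ⟨hd1, hd2⟩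
              have hya : y * s i = z ∨ y * s i = a := by
                rcases hz12 with h | h <;> rcases haor with ha | ha
                · exact absurd (ha.trans h.symm) hza
                · rcases hymid with h' | h'
                  · exact Or.inl (h'.trans h.symm)
                  · exact Or.inr (h'.trans ha.symm)
                · rcases hymid with h' | h'
                  · exact Or.inr (h'.trans ha.symm)
                  · exact Or.inl (h'.trans h.symm)
                · exact absurd (ha.trans h.symm) hza
              rcases hya with h | h
              · exfalso
                have : y = z * s i := by
                  rw [← h, cs.simple_mul_simple_cancel_right]
                rw [this] at hly
                omega
              · rw [← h, cs.simple_mul_simple_cancel_right]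
          · rintro (rfl | rfl)
            · exact ⟨hzmid.2, ⟨s i, cs.isReflection_simple i, hxx.symm, by omega⟩⟩
            · exact ⟨hs1, hs2⟩
      · -- 2b : z is not below x * s i
        have hza : ∀ a, (a = a₁ ∨ a = a₂) → a ≠ z := by
          intro a haor hc
          apply hzxs
          have := (hmid a haor).2
          rw [hc] at this
          exact le_of_step cs this
        obtain ⟨h11, h12⟩ := hmid a₁ (Or.inl rfl)
        obtain ⟨h21, h22⟩ := hmid a₂ (Or.inr rfl)
        obtain ⟨hs11, hs12⟩ := hbuild a₁ h11 h12 (hasc a₁ h11 h12 (hza a₁ (Or.inl rfl)))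
        obtain ⟨hs21, hs22⟩ := hbuild a₂ h21 h22 (hasc a₂ h21 h22 (hza a₂ (Or.inr rfl)))
        refine ⟨a₁ * s i, a₂ * s i, ?_, ?_⟩
        · intro h
          exact hane (mul_simple_cancel cs i h)
        · intro y
          constructor
          · rintro ⟨hzy, hyx⟩
            rcases cs.length_mul_simple y i with hy | hy
            · exfalso
              have h1 : BruhatLE cs y (x * s i) :=
                lifting_c cs hdesc (le_of_step cs hyx) (by omega)
              exact hzxs ((le_of_step cs hzy).trans h1)
            · obtain ⟨hd1, hd2⟩ := hdown y hzy hyx (by omega)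
              have hymid : y * s i = a₁ ∨ y * s i = a₂ := (hachar (y * s i)).mp ⟨hd1, hd2⟩
              rcases hymid with h | h
              · left
                rw [← h, cs.simple_mul_simple_cancel_right]
              · right
                rw [← h, cs.simple_mul_simple_cancel_right]
          · rintro (rfl | rfl)
            · exact ⟨hs11, hs12⟩
            · exact ⟨hs21, hs22⟩

lemma middle_iff {z x : W} (hlen : ℓ x = ℓ z + 2) (y : W) :
    (BruhatLT cs z y ∧ BruhatLT cs y x) ↔ (BruhatStep cs z y ∧ BruhatStep cs y x) := by
  constructor
  · rintro ⟨h1, h2⟩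
    have l1 := lt_length_lt cs h1
    have l2 := lt_length_lt cs h2
    exact ⟨step_of_le_of_length_le cs h1.1 (by omega) h1.2,
           step_of_le_of_length_le cs h2.1 (by omega) h2.2⟩
  · rintro ⟨h1, h2⟩
    have l1 := step_length_lt cs h1
    have l2 := step_length_lt cs h2
    exact ⟨⟨le_of_step cs h1, by intro h; rw [h] at l1; omega⟩,
           ⟨le_of_step cs h2, by intro h; rw [h] at l2; omega⟩⟩

end BruhatAux

/-- Any length-two Bruhat interval `[z,x]` in a Coxeter group contains
exactly two elements `y` with `z < y < x`. -/
theorem length_two_bruhat_interval_has_exactly_two_middle_elements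
    {W : Type*} [Group W] {M : CoxeterMatrix B} (cs : CoxeterSystem M W)
    (z x : W) (hle : BruhatLE cs z x) (hlen : cs.length x = cs.length z + 2) :
    ∃ y₁ y₂ : W, y₁ ≠ y₂ ∧
      {y : W | BruhatLT cs z y ∧ BruhatLT cs y x} = {y₁, y₂} := by
  obtain ⟨y₁, y₂, hne, hchar⟩ := BruhatAux.diamond cs (cs.length x) x z rfl hle hlen
  refine ⟨y₁, y₂, hne, ?_⟩
  ext y
  simp only [Set.mem_setOf_eq, Set.mem_insert_iff, Set.mem_singleton_iff]
  rw [← hchar y]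
  exact BruhatAux.middle_iff cs hlen y
end

section
/- Let w ∈ S_n be a Grassmannian permutation with unique descent at k, and let v_P(w) = w w₀^P be the maximal coset representative of wW_P. Then the coessential set Coess(v_P(w)) equals {(i,k) : w⁻¹(i) ≤ k < w⁻¹(i+1)}, and for each such pair, the rank number r_{i,k}(v_P(w)) = #{j ≤ k : v_P(w)(j) ≤ i} equals w⁻¹(i). -/
open Equiv

/-- `w` is a Grassmannian permutation of `{1, …, n}` with unique descent at `k`:
`w` fixes everything outside `[1, n]`, is increasing on `[1, k]` and on `[k+1, n]`,
and has a descent at `k`. -/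
def IsGrassmannian (n k : ℕ) (w : Equiv.Perm ℕ) : Prop :=
  (∀ i, i ∉ Set.Icc 1 n → w i = i) ∧
  (∀ i j, 1 ≤ i → i < j → j ≤ k → w i < w j) ∧
  (∀ i j, k + 1 ≤ i → i < j → j ≤ n → w i < w j) ∧
  w (k + 1) < w k

/-- The rank number `r_{p,q}(v) = #{j ≤ q : v(j) ≤ p}`. -/
def rankNum (v : Equiv.Perm ℕ) (p q : ℕ) : ℕ :=
  ((Finset.Icc 1 q).filter (fun j => v j ≤ p)).card

/-- Fulton's coessential set of a permutation of `{1, …, n}`: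
`Coess(v) = {(p,q) : v⁻¹(p) ≤ q < v⁻¹(p+1) and v(q) ≤ p < v(q+1)}`,
with `1 ≤ p, q ≤ n - 1`. -/
def Coess (n : ℕ) (v : Equiv.Perm ℕ) : Set (ℕ × ℕ) :=
  {pq | 1 ≤ pq.1 ∧ pq.1 < n ∧ 1 ≤ pq.2 ∧ pq.2 < n ∧
    v⁻¹ pq.1 ≤ pq.2 ∧ pq.2 < v⁻¹ (pq.1 + 1) ∧
    v pq.2 ≤ pq.1 ∧ pq.1 < v (pq.2 + 1)}

/-- The parabolic subgroup of permutations generated by the adjacent transpositions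
`(j, j+1)` for `j ∈ S`. -/
def permParabolic (S : Set ℕ) : Subgroup (Equiv.Perm ℕ) :=
  Subgroup.closure ((fun j => Equiv.swap j (j + 1)) '' S)

/-- `v` is the maximal length representative of the coset `w · W_S`: it lies in the
coset and has a descent at every position of `S`. -/
def IsMaxRep (S : Set ℕ) (w v : Equiv.Perm ℕ) : Prop :=
  (∃ u ∈ permParabolic S, v = w * u) ∧ ∀ j ∈ S, v (j + 1) < v j

/-- The positions of the simple roots generating the maximal parabolic `P` with
`W_P = S_k × S_{n-k}`. -/
def SP (n k : ℕ) : Set ℕ := {j | 1 ≤ j ∧ j < n ∧ j ≠ k}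

/-- The positions `j` of the simple roots `α_j ∈ Δ_w = {α_j : w(j+1) = w(j)+1, j ≠ k}`
generating the parabolic subgroup `Q`. -/
def DeltaW (n k : ℕ) (w : Equiv.Perm ℕ) : Set ℕ :=
  {j | 1 ≤ j ∧ j < n ∧ j ≠ k ∧ w (j + 1) = w j + 1}


private lemma perm_apply_inv_self_aux (f : Equiv.Perm ℕ) (x : ℕ) : f (f⁻¹ x) = x := by
  simp only [Equiv.Perm.coe_inv, Equiv.apply_symm_apply]

private lemma chain_lt_aux (f : ℕ → ℕ) (a b : ℕ)
    (h : ∀ m, a ≤ m → m < b → f (m + 1) < f m) :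
    ∀ i j, a ≤ i → i < j → j ≤ b → f j < f i := by
  intro i j hai
  induction j with
  | zero => intro h1 h2; omega
  | succ m ih =>
    intro hij hjb
    rcases eq_or_lt_of_le (Nat.lt_succ_iff.mp hij) with h1 | h1
    · subst h1; exact h i hai (by omega)
    · exact (h m (by omega) (by omega)).trans (ih h1 (by omega))

private lemma inv_maps_aux (u : Equiv.Perm ℕ) (a b : ℕ)
    (h : ∀ i, a ≤ i → i ≤ b → a ≤ u i ∧ u i ≤ b) :
    ∀ i, a ≤ i → i ≤ b → a ≤ u⁻¹ i ∧ u⁻¹ i ≤ b := by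
  intro i hai hib
  have himg : (Finset.Icc a b).image u = Finset.Icc a b := by
    apply Finset.eq_of_subset_of_card_le
    · intro x hx
      simp only [Finset.mem_image, Finset.mem_Icc] at hx ⊢
      obtain ⟨j, hj, rfl⟩ := hx
      exact h j hj.1 hj.2
    · rw [Finset.card_image_of_injective _ u.injective]
  have hmem : i ∈ (Finset.Icc a b).image u := by
    rw [himg]; simp only [Finset.mem_Icc]; omega
  simp only [Finset.mem_image, Finset.mem_Icc] at hmem
  obtain ⟨j, hj, hji⟩ := hmem
  have hji' : u⁻¹ i = j := by rw [← hji]; simp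
  rw [hji']; exact hj

private lemma inv_bounds_aux (v : Equiv.Perm ℕ) (n : ℕ)
    (hfix : ∀ i, i ∉ Set.Icc 1 n → v i = i) :
    ∀ p, 1 ≤ p → p ≤ n → 1 ≤ v⁻¹ p ∧ v⁻¹ p ≤ n := by
  intro p h1 h2
  by_contra hc
  have hfix' := hfix (v⁻¹ p) (by simp only [Set.mem_Icc]; omega)
  rw [perm_apply_inv_self_aux] at hfix'
  omega

private def PPropAux (n k : ℕ) (u : Equiv.Perm ℕ) : Prop :=
  (∀ i, 1 ≤ i → i ≤ k → 1 ≤ u i ∧ u i ≤ k) ∧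
  (∀ i, k + 1 ≤ i → i ≤ n → k + 1 ≤ u i ∧ u i ≤ n) ∧
  (∀ i, ¬(1 ≤ i ∧ i ≤ n) → u i = i)

private lemma pprop_of_mem (n k : ℕ) {u : Equiv.Perm ℕ}
    (hu : u ∈ permParabolic (SP n k)) : PPropAux n k u := by
  induction hu using Subgroup.closure_induction with
  | mem x hx =>
    obtain ⟨j, hj, rfl⟩ := hx
    obtain ⟨hj1, hj2, hj3⟩ : 1 ≤ j ∧ j < n ∧ j ≠ k := hj
    refine ⟨?_, ?_, ?_⟩
    · intro i h1 h2
      rcases eq_or_ne i j with rfl | hij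
      · rw [Equiv.swap_apply_left]; omega
      rcases eq_or_ne i (j + 1) with rfl | hij1
      · rw [Equiv.swap_apply_right]; omega
      · rw [Equiv.swap_apply_of_ne_of_ne hij hij1]; omega
    · intro i h1 h2
      rcases eq_or_ne i j with rfl | hij
      · rw [Equiv.swap_apply_left]; omega
      rcases eq_or_ne i (j + 1) with rfl | hij1
      · rw [Equiv.swap_apply_right]; omega
      · rw [Equiv.swap_apply_of_ne_of_ne hij hij1]; omega
    · intro i h1
      have hij : i ≠ j := by omega
      have hij1 : i ≠ j + 1 := by omega
      rw [Equiv.swap_apply_of_ne_of_ne hij hij1]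
  | one => exact ⟨fun i h1 h2 => by simpa using And.intro h1 h2,
      fun i h1 h2 => by simpa using And.intro h1 h2, fun i h => rfl⟩
  | mul x y hx hy px py =>
    refine ⟨?_, ?_, ?_⟩
    · intro i h1 h2
      have := py.1 i h1 h2
      exact px.1 (y i) this.1 this.2
    · intro i h1 h2
      have := py.2.1 i h1 h2
      exact px.2.1 (y i) this.1 this.2
    · intro i h
      rw [Equiv.Perm.mul_apply, py.2.2 i h, px.2.2 i h]
  | inv x hx px =>
    refine ⟨inv_maps_aux x 1 k px.1, inv_maps_aux x (k + 1) n px.2.1, ?_⟩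
    intro i h
    have := px.2.2 i h
    conv_lhs => rw [← this]
    simp


/-- Let `w ∈ S_n` be a Grassmannian permutation with unique descent
at `k`, and let `v = v_P(w) = w·w₀^P` be the maximal representative of `w·W_P` (where
`W_P = S_k × S_{n-k}`).  Then `Coess(v) = {(i,k) : w⁻¹(i) ≤ k < w⁻¹(i+1)}`, and for
each such pair the rank number `r_{i,k}(v)` equals `w⁻¹(i)`. -/
theorem coess_of_maxRep_grassmannian
    (n k : ℕ) (w v : Equiv.Perm ℕ)
    (hk1 : 1 ≤ k) (hkn : k < n)
    (hG : IsGrassmannian n k w)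
    (hv : IsMaxRep (SP n k) w v) :
    Coess n v = {pq | ∃ i, 1 ≤ i ∧ i < n ∧
        w⁻¹ i ≤ k ∧ k < w⁻¹ (i + 1) ∧ pq = (i, k)} ∧
    (∀ i, 1 ≤ i → i < n → w⁻¹ i ≤ k → k < w⁻¹ (i + 1) →
        rankNum v i k = w⁻¹ i) := by
  obtain ⟨⟨u, hu, hvwu⟩, hdesc⟩ := hv
  subst hvwu
  obtain ⟨hGfix, hGm1, hGm2, hGd⟩ := hG
  obtain ⟨hA, hB, hO⟩ := pprop_of_mem n k hu
  have hA' := inv_maps_aux u 1 k hA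
  have hB' := inv_maps_aux u (k + 1) n hB
  have hvfix : ∀ i, i ∉ Set.Icc 1 n → (w * u) i = i := by
    intro i hi
    rw [Equiv.Perm.mul_apply, hO i (by simpa [Set.mem_Icc] using hi), hGfix i hi]
  have hwinv := inv_bounds_aux w n hGfix
  have hvinv := inv_bounds_aux (w * u) n hvfix
  have hvi : ∀ p, (w * u)⁻¹ p = u⁻¹ (w⁻¹ p) := by
    intro p; rw [mul_inv_rev, Equiv.Perm.mul_apply]
  have hwle1 : ∀ i j, 1 ≤ i → i ≤ j → j ≤ k → w i ≤ w j := by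
    intro i j h1 h2 h3
    rcases eq_or_lt_of_le h2 with rfl | h
    · exact le_rfl
    · exact le_of_lt (hGm1 i j h1 h h3)
  have hwle2 : ∀ i j, k + 1 ≤ i → i ≤ j → j ≤ n → w i ≤ w j := by
    intro i j h1 h2 h3
    rcases eq_or_lt_of_le h2 with rfl | h
    · exact le_rfl
    · exact le_of_lt (hGm2 i j h1 h h3)
  have hvd1 : ∀ i j, 1 ≤ i → i < j → j ≤ k → (w * u) j < (w * u) i := by
    refine chain_lt_aux _ 1 k ?_
    intro m h1 h2
    exact hdesc m ⟨h1, by omega, by omega⟩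
  have hvd2 : ∀ i j, k + 1 ≤ i → i < j → j ≤ n → (w * u) j < (w * u) i := by
    refine chain_lt_aux _ (k + 1) n ?_
    intro m h1 h2
    exact hdesc m ⟨by omega, h2, by omega⟩
  have hmulapp : ∀ j, (w * u) j = w (u j) := fun j => rfl
  -- v k = w 1
  have hvk : (w * u) k = w 1 := by
    have hu1 := hA' 1 le_rfl hk1
    have h1 : (w * u) (u⁻¹ 1) = w 1 := by
      rw [hmulapp, perm_apply_inv_self_aux]
    have h2 : (w * u) k ≤ (w * u) (u⁻¹ 1) := by
      rcases eq_or_lt_of_le hu1.2 with h | h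
      · rw [h]
      · exact le_of_lt (hvd1 _ _ hu1.1 h le_rfl)
    rw [h1] at h2
    have huk := hA k hk1 le_rfl
    have h3 : w 1 ≤ w (u k) := hwle1 1 (u k) le_rfl huk.1 huk.2
    rw [← hmulapp] at h3
    omega
  -- v (k+1) = w n
  have hvk1 : (w * u) (k + 1) = w n := by
    have hun := hB' n (by omega) le_rfl
    have h1 : (w * u) (u⁻¹ n) = w n := by
      rw [hmulapp, perm_apply_inv_self_aux]
    have h2 : (w * u) (u⁻¹ n) ≤ (w * u) (k + 1) := by
      rcases eq_or_lt_of_le hun.1 with h | h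
      · rw [← h]
      · exact le_of_lt (hvd2 _ _ le_rfl h hun.2)
    rw [h1] at h2
    have huk := hB (k + 1) le_rfl (by omega)
    have h3 : w (u (k + 1)) ≤ w n := hwle2 (u (k + 1)) n huk.1 huk.2 le_rfl
    rw [← hmulapp] at h3
    omega
  constructor
  · ext pq
    obtain ⟨p, q⟩ := pq
    simp only [Coess, Set.mem_setOf_eq, Prod.mk.injEq]
    constructor
    · rintro ⟨hp1, hpn, hq1, hqn, hip, hip1, hvq, hvq1⟩
      have hqk : q = k := by
        by_contra hqk
        have := hdesc q ⟨hq1, hqn, hqk⟩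
        omega
      subst hqk
      refine ⟨p, hp1, hpn, ?_, ?_, rfl, rfl⟩
      · rw [hvi] at hip
        have hb := hvinv p hp1 (by omega)
        rw [hvi] at hb
        have := hA (u⁻¹ (w⁻¹ p)) hb.1 hip
        rw [perm_apply_inv_self_aux] at this
        exact this.2
      · rw [hvi] at hip1
        have hb := hvinv (p + 1) (by omega) (by omega)
        rw [hvi] at hb
        have := hB (u⁻¹ (w⁻¹ (p + 1))) (by omega) hb.2
        rw [perm_apply_inv_self_aux] at this
        omega
    · rintro ⟨i, hi1, hin, hwik, hkwi1, rfl, rfl⟩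
      have hwi := hwinv p hi1 (by omega)
      have hwi1 := hwinv (p + 1) (by omega) (by omega)
      refine ⟨hi1, hin, hk1, hkn, ?_, ?_, ?_, ?_⟩
      · rw [hvi]
        exact (hA' (w⁻¹ p) hwi.1 hwik).2
      · rw [hvi]
        have := hB' (w⁻¹ (p + 1)) hkwi1 hwi1.2
        omega
      · rw [hvk]
        have h1 : w 1 ≤ w (w⁻¹ p) := hwle1 1 (w⁻¹ p) le_rfl hwi.1 hwik
        rw [perm_apply_inv_self_aux] at h1
        exact h1
      · rw [hvk1]
        have h1 : w (w⁻¹ (p + 1)) ≤ w n := hwle2 (w⁻¹ (p + 1)) n hkwi1 hwi1.2 le_rfl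
        rw [perm_apply_inv_self_aux] at h1
        omega
  · intro i hi1 hin hwik hkwi1
    have hwi := hwinv i hi1 (by omega)
    unfold rankNum
    have hcard : ((Finset.Icc 1 k).filter (fun j => (w * u) j ≤ i)).card
        = ((Finset.Icc 1 k).filter (fun j => w j ≤ i)).card := by
      apply Finset.card_bij (fun j _ => u j)
      · intro a ha
        simp only [Finset.mem_filter, Finset.mem_Icc] at ha ⊢
        have := hA a ha.1.1 ha.1.2
        exact ⟨⟨this.1, this.2⟩, by rw [← hmulapp]; exact ha.2⟩
      · intro a₁ _ a₂ _ h
        exact u.injective h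
      · intro b hb
        simp only [Finset.mem_filter, Finset.mem_Icc] at hb
        refine ⟨u⁻¹ b, ?_, ?_⟩
        · simp only [Finset.mem_filter, Finset.mem_Icc]
          have := hA' b hb.1.1 hb.1.2
          refine ⟨⟨this.1, this.2⟩, ?_⟩
          rw [hmulapp, perm_apply_inv_self_aux]
          exact hb.2
        · simp
    have hset : (Finset.Icc 1 k).filter (fun j => w j ≤ i) = Finset.Icc 1 (w⁻¹ i) := by
      ext j
      simp only [Finset.mem_filter, Finset.mem_Icc]
      constructor
      · rintro ⟨⟨hj1, hjk⟩, hwj⟩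
        refine ⟨hj1, ?_⟩
        by_contra hc
        push_neg at hc
        have := hGm1 (w⁻¹ i) j hwi.1 hc hjk
        rw [perm_apply_inv_self_aux] at this
        omega
      · rintro ⟨hj1, hji⟩
        have h1 : w j ≤ w (w⁻¹ i) := hwle1 j (w⁻¹ i) hj1 hji hwik
        rw [perm_apply_inv_self_aux] at h1
        exact ⟨⟨hj1, le_trans hji hwik⟩, h1⟩
    rw [hcard, hset, Nat.card_Icc]
    omega
end

section
/- Let w ∈ S_n be a non-identity Grassmannian permutation with unique descent at k, and Q the parabolic generated by Δ_w = {α_j : w(j+1)=w(j)+1, j ≠ k}. Let v_Q(w) denote the maximal coset representative of wW_Q. Then Coess(v_Q(w)) = A ∪ B where A = {(i, w⁻¹(i)) : w⁻¹(i) < k < w⁻¹(i+1)} and B = {(i, w⁻¹(i+1) − 1) : w⁻¹(i) < k+1 < w⁻¹(i+1)}. -/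
open Equiv

theorem Equiv.Perm.apply_inv_self {α : Type*} (f : Equiv.Perm α) (x : α) : f (f⁻¹ x) = x :=
  f.apply_symm_apply x

theorem Equiv.Perm.inv_apply_self {α : Type*} (f : Equiv.Perm α) (x : α) : f⁻¹ (f x) = x :=
  f.symm_apply_apply x

/-- Any element of the parabolic subgroup preserves the initial segment `[0, j]`
whenever `j ∉ S`. -/
lemma permParabolic_pres (S : Set ℕ) (u : Equiv.Perm ℕ) (hu : u ∈ permParabolic S)
    (j : ℕ) (hj : j ∉ S) : ∀ m, u m ≤ j ↔ m ≤ j := by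
  have hu' : u ∈ Subgroup.closure ((fun j => Equiv.swap j (j + 1)) '' S) := hu
  clear hu
  induction hu' using Subgroup.closure_induction with
  | mem g hg =>
    obtain ⟨i, hiS, rfl⟩ := hg
    intro m
    have hij : i ≠ j := fun h => hj (h ▸ hiS)
    rcases eq_or_ne m i with rfl | h1
    · rw [Equiv.swap_apply_left]; omega
    · rcases eq_or_ne m (i + 1) with rfl | h2
      · rw [Equiv.swap_apply_right]; omega
      · rw [Equiv.swap_apply_of_ne_of_ne h1 h2]
  | one => intro m; simp
  | mul g h hg hh ihg ihh => intro m; rw [Equiv.Perm.mul_apply, ihg, ihh]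
  | inv g hg ih => intro m; rw [← ih (g⁻¹ m), Equiv.Perm.apply_inv_self]

/-- Let `w ∈ S_n` be a non-identity Grassmannian permutation with
unique descent at `k`, `Q` the parabolic generated by
`Δ_w = {α_j : w(j+1) = w(j)+1, j ≠ k}`, and `v = v_Q(w)` the maximal representative of
`w·W_Q`.  Then `Coess(v_Q(w)) = A ∪ B` where
`A = {(i, w⁻¹(i)) : w⁻¹(i) < k < w⁻¹(i+1)}` and
`B = {(i, w⁻¹(i+1) − 1) : w⁻¹(i) < k+1 < w⁻¹(i+1)}`. -/
theorem coess_of_maxRep_Q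
    (n k : ℕ) (w v : Equiv.Perm ℕ)
    (hk1 : 1 ≤ k) (hkn : k < n)
    (hG : IsGrassmannian n k w) (hne : w ≠ 1)
    (hv : IsMaxRep (DeltaW n k w) w v) :
    Coess n v =
      {pq | ∃ i, 1 ≤ i ∧ i < n ∧
          w⁻¹ i < k ∧ k < w⁻¹ (i + 1) ∧ pq = (i, w⁻¹ i)} ∪
      {pq | ∃ i, 1 ≤ i ∧ i < n ∧
          w⁻¹ i < k + 1 ∧ k + 1 < w⁻¹ (i + 1) ∧ pq = (i, w⁻¹ (i + 1) - 1)} := by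
  classical
  obtain ⟨hfix, hs1, hs2, hdsc⟩ := hG
  obtain ⟨⟨u, hu, rfl⟩, hvd⟩ := hv
  -- basic facts
  have hpres : ∀ j, j ∉ DeltaW n k w → ∀ m, u m ≤ j ↔ m ≤ j :=
    fun j hj => permParabolic_pres _ u hu j hj
  have hpres' : ∀ j, j ∉ DeltaW n k w → ∀ m, u⁻¹ m ≤ j ↔ m ≤ j :=
    fun j hj => permParabolic_pres _ u⁻¹ (inv_mem hu) j hj
  have hnotmem : ∀ j : ℕ, (j = 0 ∨ n ≤ j ∨ j = k) → j ∉ DeltaW n k w := by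
    intro j hj hmem
    simp only [DeltaW, Set.mem_setOf_eq] at hmem
    omega
  have h0_brk : (0 : ℕ) ∉ DeltaW n k w := hnotmem 0 (Or.inl rfl)
  have hn_brk : n ∉ DeltaW n k w := hnotmem n (Or.inr (Or.inl le_rfl))
  have hk_brk : k ∉ DeltaW n k w := hnotmem k (Or.inr (Or.inr rfl))
  have hu_pos : ∀ m, 1 ≤ m → 1 ≤ u m := by
    intro m hm; have := hpres 0 h0_brk m; omega
  have hu_len : ∀ m, m ≤ n → u m ≤ n := fun m hm => (hpres n hn_brk m).mpr hm
  have hinvapp : ∀ m, (w * u)⁻¹ m = u⁻¹ (w⁻¹ m) := by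
    intro m; rw [mul_inv_rev, Equiv.Perm.mul_apply]
  have hwiIcc : ∀ m, 1 ≤ m → m ≤ n → 1 ≤ w⁻¹ m ∧ w⁻¹ m ≤ n := by
    intro m h1 h2
    by_contra h
    have hfx : w⁻¹ m ∉ Set.Icc 1 n := by rw [Set.mem_Icc]; exact h
    have h3 := hfix _ hfx
    rw [Equiv.Perm.apply_inv_self] at h3
    rw [← h3] at h
    exact h ⟨h1, h2⟩
  have hle1 : ∀ a b, 1 ≤ a → a ≤ b → b ≤ k → w a ≤ w b := by
    intro a b h1 h2 h3
    rcases eq_or_lt_of_le h2 with rfl | h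
    · exact le_rfl
    · exact (hs1 a b h1 h h3).le
  have hle2 : ∀ a b, k + 1 ≤ a → a ≤ b → b ≤ n → w a ≤ w b := by
    intro a b h1 h2 h3
    rcases eq_or_lt_of_le h2 with rfl | h
    · exact le_rfl
    · exact (hs2 a b h1 h h3).le
  -- descent chain
  have hdes : ∀ t s, s < t → (∀ j, s ≤ j → j < t → j ∈ DeltaW n k w) →
      (w * u) t < (w * u) s := by
    intro t
    induction t with
    | zero => intro s h _; omega
    | succ t ih =>
      intro s hst hall
      rcases Nat.lt_or_ge s t with h | h
      · have h1 := ih s h (fun j hj1 hj2 => hall j hj1 (by omega))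
        have h2 := hvd t (hall t (by omega) (by omega))
        omega
      · have hst' : s = t := by omega
        subst hst'
        exact hvd s (hall s le_rfl (by omega))
  -- same-block contradiction
  have hblock : ∀ x, x ∈ DeltaW n k w → u⁻¹ x < u⁻¹ (x + 1) → False := by
    intro x hxD hlt
    have hxm := hxD
    simp only [DeltaW, Set.mem_setOf_eq] at hxm
    obtain ⟨hd1, hd2, hd3, hd4⟩ := hxm
    have hex : ∃ j, x < j ∧ j ∉ DeltaW n k w := ⟨n, hd2, hn_brk⟩
    obtain ⟨hb1, hb2⟩ := Nat.find_spec hex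
    set b := Nat.find hex with hbdef
    have hbmin : ∀ j, x < j → j < b → j ∈ DeltaW n k w := by
      intro j h1 h2
      by_contra hc
      exact Nat.find_min hex h2 ⟨h1, hc⟩
    set a := Nat.findGreatest (fun j => j ∉ DeltaW n k w) x with hadef
    have ha1 : a ∉ DeltaW n k w := Nat.findGreatest_spec (P := fun j => j ∉ DeltaW n k w) (Nat.zero_le x) h0_brk
    have hale : a ≤ x := Nat.findGreatest_le x
    have hax : a < x := lt_of_le_of_ne hale (fun h => ha1 (by rw [h]; exact hxD))
    have hamax : ∀ j, a < j → j ≤ x → j ∈ DeltaW n k w := by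
      intro j h1 h2
      by_contra hc
      exact Nat.findGreatest_is_greatest h1 h2 hc
    have hq1 := hpres' a ha1 x
    have hq2 := hpres' b hb2 (x + 1)
    have key := hdes (u⁻¹ (x + 1)) (u⁻¹ x) hlt (by
      intro j hj1 hj2
      have hja : a < j := by omega
      have hjb : j < b := by omega
      rcases le_or_gt j x with h | h
      · exact hamax j hja h
      · exact hbmin j h hjb)
    have e1 : (w * u) (u⁻¹ x) = w x := by
      rw [Equiv.Perm.mul_apply, Equiv.Perm.apply_inv_self]
    have e2 : (w * u) (u⁻¹ (x + 1)) = w (x + 1) := by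
      rw [Equiv.Perm.mul_apply, Equiv.Perm.apply_inv_self]
    omega
  -- the two break facts at x and y-1 in the crossing case
  have hxbrk : ∀ p x y, w⁻¹ p = x → w⁻¹ (p + 1) = y → x ≤ k → k < y →
      x ∉ DeltaW n k w := by
    intro p x y hxd hyd hxk hky hmem
    simp only [DeltaW, Set.mem_setOf_eq] at hmem
    obtain ⟨hd1, hd2, hd3, hd4⟩ := hmem
    have hwx : w x = p := by rw [← hxd, Equiv.Perm.apply_inv_self]
    have e : w (x + 1) = p + 1 := by omega
    have e2 := congrArg (⇑w⁻¹) e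
    rw [Equiv.Perm.inv_apply_self, hyd] at e2
    omega
  have hybrk : ∀ p x y, w⁻¹ p = x → w⁻¹ (p + 1) = y → x ≤ k → k + 1 < y →
      (y - 1) ∉ DeltaW n k w := by
    intro p x y hxd hyd hxk hky hmem
    simp only [DeltaW, Set.mem_setOf_eq] at hmem
    obtain ⟨hd1, hd2, hd3, hd4⟩ := hmem
    have hyy : y - 1 + 1 = y := by omega
    rw [hyy] at hd4
    have hwy : w y = p + 1 := by rw [← hyd, Equiv.Perm.apply_inv_self]
    have e : w (y - 1) = p := by omega
    have e2 := congrArg (⇑w⁻¹) e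
    rw [Equiv.Perm.inv_apply_self, hxd] at e2
    omega
  -- the key characterization of values of v in the crossing case
  have hchar : ∀ p x y, w x = p → w y = p + 1 → 1 ≤ x → x ≤ k → k < y → y ≤ n →
      x ∉ DeltaW n k w → (k + 1 < y → (y - 1) ∉ DeltaW n k w) →
      ∀ m, 1 ≤ m → m ≤ n →
        ((w * u) m ≤ p ↔ (m ≤ x ∨ (k + 1 ≤ m ∧ m + 1 ≤ y))) := by
    intro p x y hwx hwy hx1 hxk hky hyn hxb hyb m hm1 hmn
    rw [Equiv.Perm.mul_apply]
    rcases le_or_gt m k with hmk | hmk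
    · have hum_k : u m ≤ k := (hpres k hk_brk m).mpr hmk
      have hum_1 : 1 ≤ u m := hu_pos m hm1
      have hxiff : u m ≤ x ↔ m ≤ x := hpres x hxb m
      constructor
      · intro h
        left
        rw [← hxiff]
        by_contra hc
        push_neg at hc
        have := hs1 x (u m) hx1 hc hum_k
        omega
      · intro h
        have hux : u m ≤ x := by
          rcases h with h | h
          · exact hxiff.mpr h
          · omega
        have := hle1 (u m) x hum_1 hux hxk
        omega
    · have hum_k : k < u m := by have := hpres k hk_brk m; omega
      have hum_n : u m ≤ n := hu_len m hmn
      constructor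
      · intro h
        right
        refine ⟨by omega, ?_⟩
        have huy : u m < y := by
          by_contra hc
          push_neg at hc
          have := hle2 y (u m) (by omega) hc hum_n
          omega
        rcases Nat.lt_or_ge (k + 1) y with h2 | h2
        · have := hpres (y - 1) (hyb h2) m
          omega
        · omega
      · intro h
        rcases h with h | ⟨hh1, hh2⟩
        · omega
        · have h3 := hpres (y - 1) (hyb (by omega)) m
          have huy : u m ≤ y - 1 := by omega
          have : w (u m) < w y := hs2 (u m) y (by omega) (by omega) hyn
          omega
  -- main proof
  ext ⟨p, q⟩
  simp only [Coess, Set.mem_union, Set.mem_setOf_eq]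
  constructor
  · rintro ⟨hp1, hpn, hq1, hqn, h5, h6, h7, h8⟩
    obtain ⟨x, hxd⟩ : ∃ x, w⁻¹ p = x := ⟨_, rfl⟩
    obtain ⟨y, hyd⟩ : ∃ y, w⁻¹ (p + 1) = y := ⟨_, rfl⟩
    have hwx : w x = p := by rw [← hxd, Equiv.Perm.apply_inv_self]
    have hwy : w y = p + 1 := by rw [← hyd, Equiv.Perm.apply_inv_self]
    have hxI := hwiIcc p hp1 (by omega)
    rw [hxd] at hxI
    have hyI := hwiIcc (p + 1) (by omega) (by omega)
    rw [hyd] at hyI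
    have h5' : u⁻¹ x ≤ q := by rw [hinvapp, hxd] at h5; exact h5
    have h6' : q < u⁻¹ y := by rw [hinvapp, hyd] at h6; exact h6
    have hxy : x ≠ y := by intro h; rw [h] at hwx; omega
    rcases le_or_gt x k with hxk | hxk
    · rcases le_or_gt y k with hyk | hyk
      · -- both parts in [1,k] : same block, contradiction
        exfalso
        have hyx : y = x + 1 := by
          rcases Nat.lt_or_ge y x with h | h
          · have := hs1 y x hyI.1 h hxk; omega
          · rcases Nat.lt_or_ge (x + 1) y with h2 | h2
            · have e1 := hs1 x (x + 1) hxI.1 (by omega) (by omega)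
              have e2 := hs1 (x + 1) y (by omega) h2 hyk
              omega
            · omega
        refine hblock x ?_ (by rw [hyx] at h6'; omega)
        simp only [DeltaW, Set.mem_setOf_eq]
        exact ⟨hxI.1, by omega, by omega, by rw [← hyx, hwy, hwx]⟩
      · -- the crossing case x ≤ k < y
        have hxb := hxbrk p x y hxd hyd hxk hyk
        have hyb := hybrk p x y hxd hyd hxk
        have hc1 := (hchar p x y hwx hwy hxI.1 hxk hyk hyI.2 hxb hyb q hq1
          (by omega)).mp h7
        have hc2 := hchar p x y hwx hwy hxI.1 hxk hyk hyI.2 hxb hyb (q + 1)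
          (by omega) (by omega)
        rcases hc1 with h | h
        · -- q = x
          have hqx : q = x := by omega
          rcases Nat.lt_or_ge x k with hxk' | hxk'
          · left
            exact ⟨p, hp1, hpn, by rw [hxd]; omega, by rw [hyd]; omega,
              by rw [hxd]; exact congrArg (Prod.mk p) (by omega)⟩
          · exfalso
            have hxk2 : x = k := by omega
            have hyk2 : y = k + 1 := by omega
            rw [hxk2] at hwx
            rw [hyk2] at hwy
            omega
        · -- q = y - 1
          right
          have hqy : q = y - 1 := by omega
          have hky2 : k + 1 < y := by omega
          exact ⟨p, hp1, hpn, by rw [hxd]; omega, by rw [hyd]; omega,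
            by rw [hyd]; exact congrArg (Prod.mk p) (by omega)⟩
    · rcases le_or_gt y k with hyk | hyk
      · -- p+1 in first part, p in second : positions incompatible
        exfalso
        have b1 := hpres' k hk_brk x
        have b2 := hpres' k hk_brk y
        omega
      · -- both in (k, n] : same block, contradiction
        exfalso
        have hyx : y = x + 1 := by
          rcases Nat.lt_or_ge y x with h | h
          · have := hs2 y x (by omega) h hxI.2; omega
          · rcases Nat.lt_or_ge (x + 1) y with h2 | h2
            · have e1 := hs2 x (x + 1) (by omega) (by omega) (by omega)
              have e2 := hs2 (x + 1) y (by omega) h2 hyI.2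
              omega
            · omega
        refine hblock x ?_ (by rw [hyx] at h6'; omega)
        simp only [DeltaW, Set.mem_setOf_eq]
        exact ⟨by omega, by omega, by omega, by rw [← hyx, hwy, hwx]⟩
  · rintro (⟨p, hi1, hin, hik, hki, hpq⟩ | ⟨p, hi1, hin, hik, hki, hpq⟩)
    · -- set A
      rw [Prod.mk.injEq] at hpq
      obtain ⟨rfl, rfl⟩ := hpq
      obtain ⟨x, hxd⟩ : ∃ x, w⁻¹ p = x := ⟨_, rfl⟩
      obtain ⟨y, hyd⟩ : ∃ y, w⁻¹ (p + 1) = y := ⟨_, rfl⟩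
      rw [hxd] at hik ⊢
      rw [hyd] at hki
      have hwx : w x = p := by rw [← hxd, Equiv.Perm.apply_inv_self]
      have hwy : w y = p + 1 := by rw [← hyd, Equiv.Perm.apply_inv_self]
      have hxI := hwiIcc p hi1 (by omega)
      rw [hxd] at hxI
      have hyI := hwiIcc (p + 1) (by omega) (by omega)
      rw [hyd] at hyI
      have hxb := hxbrk p x y hxd hyd (by omega) hki
      have hyb := hybrk p x y hxd hyd (by omega)
      refine ⟨hi1, hin, hxI.1, by omega, ?_, ?_, ?_, ?_⟩
      · rw [hinvapp, hxd]
        exact (hpres' x hxb x).mpr le_rfl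
      · rw [hinvapp, hyd]
        have := hpres' k hk_brk y
        omega
      · exact (hchar p x y hwx hwy hxI.1 (by omega) hki hyI.2 hxb hyb x hxI.1
          (by omega)).mpr (Or.inl le_rfl)
      · have := hchar p x y hwx hwy hxI.1 (by omega) hki hyI.2 hxb hyb (x + 1)
          (by omega) (by omega)
        omega
    · -- set B
      rw [Prod.mk.injEq] at hpq
      obtain ⟨rfl, rfl⟩ := hpq
      obtain ⟨x, hxd⟩ : ∃ x, w⁻¹ p = x := ⟨_, rfl⟩
      obtain ⟨y, hyd⟩ : ∃ y, w⁻¹ (p + 1) = y := ⟨_, rfl⟩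
      rw [hxd] at hik
      rw [hyd] at hki ⊢
      have hwx : w x = p := by rw [← hxd, Equiv.Perm.apply_inv_self]
      have hwy : w y = p + 1 := by rw [← hyd, Equiv.Perm.apply_inv_self]
      have hxI := hwiIcc p hi1 (by omega)
      rw [hxd] at hxI
      have hyI := hwiIcc (p + 1) (by omega) (by omega)
      rw [hyd] at hyI
      have hxb := hxbrk p x y hxd hyd (by omega) (by omega)
      have hyb := hybrk p x y hxd hyd (by omega)
      have hyb' := hyb hki
      refine ⟨hi1, hin, by omega, by omega, ?_, ?_, ?_, ?_⟩
      · rw [hinvapp, hxd]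
        have := hpres' k hk_brk x
        omega
      · rw [hinvapp, hyd]
        have := hpres' (y - 1) hyb' y
        omega
      · exact (hchar p x y hwx hwy hxI.1 (by omega) (by omega) hyI.2 hxb hyb
          (y - 1) (by omega) (by omega)).mpr (Or.inr ⟨by omega, by omega⟩)
      · have e : y - 1 + 1 = y := by omega
        rw [e]
        have := hchar p x y hwx hwy hxI.1 (by omega) (by omega) hyI.2 hxb hyb y
          (by omega) hyI.2
        omega
end

section
/- Let w be a non-identity Grassmannian permutation with unique descent at k and let (p,q) be in the coessential set of v_Q(w) with q < k (respectively q > k). Then the rank number satisfies r_{p,q}(v_Q(w)) = q (respectively r_{p,q}(v_Q(w)) = p); i.e. the Schubert variety X_w^Q is defined by inclusions. -/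
open Equiv

lemma parabolic_le_iff {S : Set ℕ} {u : Equiv.Perm ℕ} (hu : u ∈ permParabolic S)
    {m : ℕ} (hm : m ∉ S) : ∀ x, u x ≤ m ↔ x ≤ m := by
  induction hu using Subgroup.closure_induction with
  | mem g hg =>
    obtain ⟨j, hj, rfl⟩ := hg
    intro x
    have hjm : j ≠ m := fun h => hm (h ▸ hj)
    rcases eq_or_ne x j with rfl | h1
    · rw [Equiv.swap_apply_left]; omega
    rcases eq_or_ne x (j + 1) with rfl | h2
    · rw [Equiv.swap_apply_right]; omega
    · rw [Equiv.swap_apply_of_ne_of_ne h1 h2]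
  | one => intro x; rfl
  | mul a b _ _ ha hb => intro x; rw [Equiv.Perm.mul_apply, ha, hb]
  | inv a _ ha =>
    intro x
    conv_rhs => rw [← Equiv.Perm.apply_inv_self a x]
    rw [ha]

/-- Let `w` be a non-identity Grassmannian permutation with unique
descent at `k` and `v = v_Q(w)` the maximal representative of `w·W_Q`.  For every box
`(p, q)` in the coessential set of `v`, if `q < k` then `r_{p,q}(v) = q`, and if
`q > k` then `r_{p,q}(v) = p`; i.e. the Schubert variety `X_w^Q` is defined by
inclusions (`r_{p,q}(v) = min(p,q)` on all coessential boxes). -/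
theorem XwQ_defined_by_inclusions
    (n k : ℕ) (w v : Equiv.Perm ℕ)
    (hk1 : 1 ≤ k) (hkn : k < n)
    (hG : IsGrassmannian n k w) (hne : w ≠ 1)
    (hv : IsMaxRep (DeltaW n k w) w v) :
    ∀ p q, (p, q) ∈ Coess n v →
      (q < k → rankNum v p q = q) ∧
      (k < q → rankNum v p q = p) ∧
      rankNum v p q = min p q := by
  obtain ⟨hfix, hinc1, hinc2, hwk⟩ := hG
  obtain ⟨⟨u, hu, rfl⟩, hdes⟩ := hv
  intro p q hpq
  obtain ⟨hp1, hpn, hq1, hqn, hvp, hvp1, hvq, hvq1⟩ := hpq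
  simp only [Equiv.Perm.mul_apply, mul_inv_rev, Equiv.Perm.mul_apply] at *
  -- w fixes 0 and everything above n
  have hw0 : w 0 = 0 := hfix 0 (by simp)
  have hwinv0 : w⁻¹ 0 = 0 := by
    conv_lhs => rw [← hw0]
    exact Equiv.Perm.inv_apply_self w 0
  have L1 : ∀ m, m ∉ DeltaW n k w → ∀ x, u x ≤ m ↔ x ≤ m :=
    fun m hm => parabolic_le_iff hu hm
  have L1' : ∀ m, m ∉ DeltaW n k w → ∀ x, u⁻¹ x ≤ m ↔ x ≤ m := by
    intro m hm x
    conv_rhs => rw [← Equiv.Perm.apply_inv_self u x]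
    exact (L1 m hm _).symm
  have h0D : (0 : ℕ) ∉ DeltaW n k w := by intro h; exact absurd h.1 (by omega)
  -- q is not in DeltaW, since v has an ascent at q
  have hqD : q ∉ DeltaW n k w := by
    intro h
    have := hdes q h
    omega
  -- transfer inverse conditions to w
  have hwp : w⁻¹ p ≤ q := by
    rw [← L1' q hqD]; exact hvp
  have hwp1 : ¬ w⁻¹ (p + 1) ≤ q := by
    rw [← L1' q hqD]; omega
  have hwpv : w (w⁻¹ p) = p := Equiv.Perm.apply_inv_self w p
  have hwp1' : 1 ≤ w⁻¹ p := by
    rcases Nat.eq_zero_or_pos (w⁻¹ p) with h | h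
    · rw [h] at hwpv; rw [hw0] at hwpv; omega
    · exact h
  rcases le_or_gt q k with hqk | hqk
  · -- case q ≤ k : rank = q
    have hwq : w q ≤ p := by
      rcases eq_or_lt_of_le hwp with h | h
      · rw [← h, hwpv]
      · exfalso
        set j0 := w⁻¹ p with hj0
        have hj0D : j0 ∉ DeltaW n k w := by
          intro hD
          have h4 := hD.2.2.2
          rw [hwpv] at h4
          have : w⁻¹ (p + 1) = j0 + 1 := by rw [← h4]; exact Equiv.Perm.inv_apply_self w _
          omega
        have huq1 : u q ≤ q := (L1 q hqD q).mpr le_rfl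
        have huq2 : ¬ u q ≤ j0 := by rw [L1 j0 hj0D q]; omega
        have := hinc1 j0 (u q) hwp1' (by omega) (by omega)
        rw [hwpv] at this
        omega
    have hmem : ∀ j ∈ Finset.Icc 1 q, w (u j) ≤ p := by
      intro j hj
      simp only [Finset.mem_Icc] at hj
      have h1 : u j ≤ q := (L1 q hqD j).mpr hj.2
      have h2 : ¬ u j ≤ 0 := by rw [L1 0 h0D j]; omega
      rcases eq_or_lt_of_le h1 with h | h
      · rw [h]; exact hwq
      · exact le_trans (le_of_lt (hinc1 (u j) q (by omega) h hqk)) hwq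
    have hrank : rankNum (w * u) p q = q := by
      unfold rankNum
      show ((Finset.Icc 1 q).filter (fun j => w (u j) ≤ p)).card = q
      rw [Finset.filter_true_of_mem (fun j hj => hmem j hj)]
      simp
    have hqp : q ≤ p := by
      have := Finset.card_le_card_of_injOn (f := fun j => w (u j))
        (s := Finset.Icc 1 q) (t := Finset.Icc 1 p)
        (fun j hj => by
          simp only [Finset.mem_coe, Finset.mem_Icc] at hj ⊢
          refine ⟨?_, hmem j (Finset.mem_Icc.mpr hj)⟩
          by_contra h
          have h2 : w (u j) = 0 := by omega
          have := (w * u).injective (a₁ := j) (a₂ := 0)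
          simp only [Equiv.Perm.mul_apply] at this
          have hu0 : u 0 = 0 := by
            have hA := (L1 0 h0D 0).mpr le_rfl
            omega
          have := this (by rw [h2, hu0, hw0])
          omega)
        (fun a _ b _ h => (w * u).injective (by simpa using h))
      simpa using this
    refine ⟨fun _ => hrank, fun h => absurd h (by omega), ?_⟩
    rw [hrank, min_eq_right hqp]
  · -- case k < q : rank = p
    have hwq1 : p < w (q + 1) := by
      by_contra hcon
      push_neg at hcon
      set t := w⁻¹ (p + 1) with hts
      have hwt : w t = p + 1 := Equiv.Perm.apply_inv_self w _
      have htq : q < t := by omega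
      have htn : t ≤ n := by
        by_contra h
        have := hfix t (by simp; omega)
        omega
      have ht2 : q + 2 ≤ t := by
        rcases eq_or_lt_of_le (show q + 1 ≤ t by omega) with h | h
        · rw [← h] at hwt; omega
        · omega
      have hwt1 : w (t - 1) ≤ p := by
        have := hinc2 (t - 1) t (by omega) (by omega) htn
        omega
      by_cases hD : (t - 1) ∈ DeltaW n k w
      · have h4 := hD.2.2.2
        have ht1 : t - 1 + 1 = t := by omega
        rw [ht1, hwt] at h4
        have : w (t - 1) = p := by omega
        have : w⁻¹ p = t - 1 := by rw [← this]; exact Equiv.Perm.inv_apply_self w _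
        omega
      · have h1 : u (q + 1) ≤ t - 1 := (L1 (t - 1) hD (q + 1)).mpr (by omega)
        have h2 : ¬ u (q + 1) ≤ q := by rw [L1 q hqD (q + 1)]; omega
        have h3 : w (u (q + 1)) ≤ p := by
          rcases eq_or_lt_of_le h1 with h | h
          · rw [h]; exact hwt1
          · have := hinc2 (u (q + 1)) (t - 1) (by omega) h (by omega)
            omega
        omega
    have hall : ∀ m, 1 ≤ m → m ≤ p → w⁻¹ m ≤ q := by
      intro m h1 h2
      by_contra h
      push_neg at h
      have hwm : w (w⁻¹ m) = m := Equiv.Perm.apply_inv_self w _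
      have hin : w⁻¹ m ≤ n := by
        by_contra hn
        have := hfix (w⁻¹ m) (by simp only [Set.mem_Icc]; omega)
        omega
      have : w (q + 1) ≤ m := by
        rcases eq_or_lt_of_le (show q + 1 ≤ w⁻¹ m by omega) with heq | hlt
        · rw [heq, hwm]
        · have := hinc2 (q + 1) (w⁻¹ m) (by omega) hlt hin
          omega
      omega
    -- rank (w*u) p q = rank w p q = p
    have hrank : rankNum (w * u) p q = p := by
      unfold rankNum
      have : ((Finset.Icc 1 q).filter (fun j => (w * u) j ≤ p)).card
          = (Finset.Icc 1 p).card := by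
        apply Finset.card_bij' (i := fun j _ => w (u j)) (j := fun m _ => u⁻¹ (w⁻¹ m))
        · intro j hj
          simp only [Finset.mem_filter, Finset.mem_Icc] at hj ⊢
          simp only [Equiv.Perm.mul_apply] at hj ⊢
          refine ⟨?_, hj.2⟩
          by_contra hcon
          have h2 : w (u j) = 0 := by omega
          have hu0 : u 0 = 0 := by
            have hA := (L1 0 h0D 0).mpr le_rfl; omega
          have := (w * u).injective (a₁ := j) (a₂ := 0)
          simp only [Equiv.Perm.mul_apply] at this
          have := this (by rw [h2, hu0, hw0])
          omega
        · intro m hm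
          simp only [Finset.mem_Icc] at hm
          simp only [Finset.mem_filter, Finset.mem_Icc]
          simp only [Equiv.Perm.mul_apply,
            Equiv.Perm.apply_inv_self]
          have hq' : w⁻¹ m ≤ q := hall m hm.1 hm.2
          have h1 : u⁻¹ (w⁻¹ m) ≤ q := (L1' q hqD _).mpr hq'
          have h0 : ¬ u⁻¹ (w⁻¹ m) ≤ 0 := by
            rw [L1' 0 h0D]
            intro hz
            have : w⁻¹ m = 0 := by omega
            rw [← hwinv0] at this
            have := w⁻¹.injective this
            omega
          exact ⟨⟨by omega, h1⟩, hm.2⟩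
        · intro j _; simp
        · intro m _; simp
      rw [this]; simp
    have hpq : p ≤ q := by
      have h1 : rankNum (w * u) p q ≤ (Finset.Icc 1 q).card := Finset.card_filter_le _ _
      simp only [Nat.card_Icc] at h1
      omega
    refine ⟨fun h => absurd h (by omega), fun _ => hrank, ?_⟩
    rw [hrank, min_eq_left hpq]
end

section
/- Let w ∈ S_n be Grassmannian with unique descent at k. If the coessential set of v_P(w) contains two boxes (p_i,k) and (p_j,k), i < j, neither of which is an inclusion box, then the permutation v_Q(w) is not covexillary: its coessential set contains boxes (p,q) and (p',q') with p < p' and q > q'. -/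
open Equiv

/-- `(p, k)` is a coessential box of `v_P(w)`, i.e. `w⁻¹(p) ≤ k < w⁻¹(p+1)`. -/
def IsCoessBox (n k : ℕ) (w : Equiv.Perm ℕ) (p : ℕ) : Prop :=
  1 ≤ p ∧ p < n ∧ w⁻¹ p ≤ k ∧ k < w⁻¹ (p + 1)

section AuxTwoBox

private def AdjSet (S : Set ℕ) (x y : ℕ) : Prop := ∀ t, min x y ≤ t → t < max x y → t ∈ S

private lemma adjset_refl (S : Set ℕ) (x : ℕ) : AdjSet S x x := by
  intro t h1 h2; exfalso; omega

private lemma adjset_symm {S : Set ℕ} {x y : ℕ} (h : AdjSet S x y) : AdjSet S y x := by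
  intro t h1 h2; exact h t (by omega) (by omega)

private lemma adjset_trans {S : Set ℕ} {x y z : ℕ} (h1 : AdjSet S x y) (h2 : AdjSet S y z) :
    AdjSet S x z := by
  intro t ht1 ht2
  by_cases hc : min x y ≤ t ∧ t < max x y
  · exact h1 t hc.1 hc.2
  · exact h2 t (by omega) (by omega)

private lemma parab_adj {S : Set ℕ} {u : Equiv.Perm ℕ} (hu : u ∈ permParabolic S) (x : ℕ) :
    AdjSet S x (u x) := by
  have hu' : u ∈ Subgroup.closure ((fun j => Equiv.swap j (j + 1)) '' S) := hu
  have key : ∀ g ∈ Subgroup.closure ((fun j => Equiv.swap j (j + 1)) '' S),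
      ∀ y, AdjSet S y (g y) := by
    intro g hg
    induction hg using Subgroup.closure_induction with
    | mem g hgen =>
      obtain ⟨j, hjS, rfl⟩ := hgen
      intro y
      rcases eq_or_ne y j with rfl | h1
      · rw [Equiv.swap_apply_left]
        intro t ht1 ht2
        have ht : t = y := by omega
        exact ht ▸ hjS
      · rcases eq_or_ne y (j + 1) with rfl | h2
        · rw [Equiv.swap_apply_right]
          intro t ht1 ht2
          have ht : t = j := by omega
          exact ht ▸ hjS
        · rw [Equiv.swap_apply_of_ne_of_ne h1 h2]
          exact adjset_refl S y
    | one =>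
      intro y
      simp only [Equiv.Perm.one_apply]
      exact adjset_refl S y
    | mul a b ha hb iha ihb =>
      intro y
      have e : (a * b) y = a (b y) := rfl
      rw [e]
      exact adjset_trans (ihb y) (iha (b y))
    | inv a ha iha =>
      intro y
      have h := iha (a⁻¹ y)
      rw [show a (a⁻¹ y) = y from a.apply_symm_apply y] at h
      exact adjset_symm h
  exact key u hu' x

private lemma run_up {w : Equiv.Perm ℕ} {S : Set ℕ} (hS : ∀ j ∈ S, w (j + 1) = w j + 1)
    (x : ℕ) : ∀ d : ℕ, (∀ t, x ≤ t → t < x + d → t ∈ S) → w (x + d) = w x + d := by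
  intro d
  induction d with
  | zero => intro _; simp
  | succ m ih =>
    intro h
    have h1 : w (x + m) = w x + m := ih (fun t ht1 ht2 => h t ht1 (by omega))
    have h2 : x + m ∈ S := h (x + m) (by omega) (by omega)
    have h3 := hS _ h2
    have e : x + (m + 1) = (x + m) + 1 := by omega
    rw [e, h3, h1]
    omega

private lemma adj_run {w : Equiv.Perm ℕ} {S : Set ℕ} (hS : ∀ j ∈ S, w (j + 1) = w j + 1)
    {x y : ℕ} (h : AdjSet S x y) (hxy : x ≤ y) : w y = w x + (y - x) := by
  have h2 := run_up hS x (y - x) (fun t ht1 ht2 => h t (by omega) (by omega))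
  rwa [show x + (y - x) = y by omega] at h2

end AuxTwoBox

/-- Let `w ∈ S_n` be Grassmannian with unique descent at `k`.  If the
coessential set of `v_P(w)` contains two boxes `(p_i, k)` and `(p_j, k)`, `p_i < p_j`,
neither of which is an inclusion box, then `v_Q(w)` is not covexillary: its coessential
set contains boxes `(p, q)` and `(p', q')` with `p < p'` and `q > q'`. -/
theorem two_non_inclusion_boxes_implies_not_covexillary
    (n k : ℕ) (w v : Equiv.Perm ℕ)
    (hk1 : 1 ≤ k) (hkn : k < n)
    (hG : IsGrassmannian n k w)
    (hv : IsMaxRep (DeltaW n k w) w v)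
    (pi pj : ℕ) (hij : pi < pj)
    (hbi : IsCoessBox n k w pi) (hbj : IsCoessBox n k w pj)
    (hnii : w⁻¹ pi ≠ min pi k) (hnij : w⁻¹ pj ≠ min pj k) :
    ∃ p q p' q', (p, q) ∈ Coess n v ∧ (p', q') ∈ Coess n v ∧
      p < p' ∧ q' < q := by
  obtain ⟨hfix, hm1, hm2, hdes⟩ := hG
  obtain ⟨⟨u, huQ, hveq⟩, hdesc⟩ := hv
  subst hveq
  -- w maps [1,n] into itself
  have hwIcc : ∀ x, 1 ≤ x → x ≤ n → 1 ≤ w x ∧ w x ≤ n := by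
    intro x hx1 hxn
    by_contra hc
    have hout : w x ∉ Set.Icc 1 n := by simp only [Set.mem_Icc]; omega
    have h1 : w (w x) = w x := hfix _ hout
    have h2 : w x = x := w.injective h1
    omega
  have hwInv : ∀ y, 1 ≤ y → y ≤ n → 1 ≤ w⁻¹ y ∧ w⁻¹ y ≤ n := by
    intro y hy1 hyn
    by_contra hc
    have hout : w⁻¹ y ∉ Set.Icc 1 n := by simp only [Set.mem_Icc]; omega
    have h1 : w (w⁻¹ y) = w⁻¹ y := hfix _ hout
    have h2 : w (w⁻¹ y) = y := w.apply_symm_apply y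
    omega
  -- w j ≥ j on the first block
  have hge : ∀ j, j ≤ k → j ≤ w j := by
    intro j
    induction j with
    | zero => intro _; omega
    | succ m ih =>
      intro hm
      rcases Nat.eq_zero_or_pos m with rfl | hmpos
      · exact (hwIcc 1 le_rfl (by omega)).1
      · have h1 : w m < w (m + 1) := hm1 m (m + 1) hmpos (by omega) hm
        have h2 := ih (by omega)
        omega
  have hJstep : ∀ j ∈ DeltaW n k w, w (j + 1) = w j + 1 := fun j hj => hj.2.2.2
  have hkJ : k ∉ DeltaW n k w := fun h => h.2.2.1 rfl
  have huinv : u⁻¹ ∈ permParabolic (DeltaW n k w) :=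
    (permParabolic (DeltaW n k w)).inv_mem huQ
  have hadj : ∀ x, AdjSet (DeltaW n k w) x (u x) := fun x => parab_adj huQ x
  have hadjI : ∀ x, AdjSet (DeltaW n k w) x (u⁻¹ x) := fun x => parab_adj huinv x
  -- basic facts about a non-inclusion box
  have boxfacts : ∀ p, IsCoessBox n k w p → w⁻¹ p ≠ min p k →
      1 ≤ w⁻¹ p ∧ w⁻¹ p < k ∧ w⁻¹ p < p := by
    intro p hb hni
    obtain ⟨hp1, hpn, hrk, hs⟩ := hb
    have hr1 : 1 ≤ w⁻¹ p := (hwInv p hp1 (by omega)).1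
    have hrp : w⁻¹ p ≤ p := by
      have h1 := hge (w⁻¹ p) hrk
      have h2 : w (w⁻¹ p) = p := w.apply_symm_apply p
      omega
    omega
  -- first contributed box : (p, r)
  have box1 : ∀ p, IsCoessBox n k w p → 1 ≤ w⁻¹ p → w⁻¹ p < k →
      (p, w⁻¹ p) ∈ Coess n (w * u) := by
    intro p hb hr1 hrk
    obtain ⟨hp1, hpn, hrk', hsk⟩ := hb
    have hwr : w (w⁻¹ p) = p := w.apply_symm_apply p
    have hrJ : w⁻¹ p ∉ DeltaW n k w := by
      intro hmem
      have h1 : w (w⁻¹ p + 1) = p + 1 := by rw [hmem.2.2.2, hwr]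
      have h2 : w⁻¹ (p + 1) = w⁻¹ p + 1 := by rw [← h1]; exact w.symm_apply_apply _
      omega
    have hinvmul : ∀ m : ℕ, (w * u)⁻¹ m = u⁻¹ (w⁻¹ m) := by
      intro m; rw [mul_inv_rev]; rfl
    simp only [Coess, Set.mem_setOf_eq]
    refine ⟨hp1, hpn, hr1, by omega, ?_, ?_, ?_, ?_⟩
    · rw [hinvmul]
      by_contra hgt
      push_neg at hgt
      exact hrJ (hadjI (w⁻¹ p) (w⁻¹ p) (by omega) (by omega))
    · rw [hinvmul]
      by_contra hle
      push_neg at hle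
      exact hkJ (hadjI (w⁻¹ (p + 1)) k (by omega) (by omega))
    · show w (u (w⁻¹ p)) ≤ p
      have hur : u (w⁻¹ p) ≤ w⁻¹ p := by
        by_contra hgt
        push_neg at hgt
        exact hrJ (hadj (w⁻¹ p) (w⁻¹ p) (by omega) (by omega))
      have h2 : w (w⁻¹ p) = w (u (w⁻¹ p)) + (w⁻¹ p - u (w⁻¹ p)) :=
        adj_run hJstep (adjset_symm (hadj (w⁻¹ p))) hur
      omega
    · show p < w (u (w⁻¹ p + 1))
      have hnJ : w⁻¹ p + 1 ≤ u (w⁻¹ p + 1) := by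
        by_contra hlt
        push_neg at hlt
        exact hrJ (hadj (w⁻¹ p + 1) (w⁻¹ p) (by omega) (by omega))
      have h2 : w (u (w⁻¹ p + 1)) = w (w⁻¹ p + 1) + (u (w⁻¹ p + 1) - (w⁻¹ p + 1)) :=
        adj_run hJstep (hadj (w⁻¹ p + 1)) hnJ
      have h3 : w (w⁻¹ p) < w (w⁻¹ p + 1) := hm1 (w⁻¹ p) (w⁻¹ p + 1) hr1 (by omega) (by omega)
      omega
  -- second contributed box : (p, k + (p - r))
  have box2 : ∀ p, IsCoessBox n k w p → 1 ≤ w⁻¹ p → w⁻¹ p < k → w⁻¹ p < p →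
      (p, k + (p - w⁻¹ p)) ∈ Coess n (w * u) := by
    intro p hb hr1 hrk hrp
    obtain ⟨hp1, hpn, hrk', hsk⟩ := hb
    have hwr : w (w⁻¹ p) = p := w.apply_symm_apply p
    have hws : w (w⁻¹ (p + 1)) = p + 1 := w.apply_symm_apply (p + 1)
    have hsn : w⁻¹ (p + 1) ≤ n := (hwInv (p + 1) (by omega) (by omega)).2
    have hinj : Function.Injective w := w.injective
    -- counting argument : w⁻¹ (p+1) = k + (p - r) + 1
    have hcount : w⁻¹ (p + 1) = k + (p - w⁻¹ p) + 1 := by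
      have himg : (Finset.Icc 1 (w⁻¹ p) ∪ Finset.Icc (k + 1) (w⁻¹ (p + 1) - 1)).image w
          = Finset.Icc 1 p := by
        ext m
        simp only [Finset.mem_image, Finset.mem_union, Finset.mem_Icc]
        constructor
        · rintro ⟨x, hx, rfl⟩
          rcases hx with ⟨hx1, hx2⟩ | ⟨hx1, hx2⟩
          · have hub : w x ≤ p := by
              rcases eq_or_lt_of_le hx2 with heq | hlt
              · rw [heq, hwr]
              · have := hm1 x (w⁻¹ p) hx1 hlt (by omega)
                omega
            have hlb := (hwIcc x hx1 (by omega)).1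
            exact ⟨hlb, hub⟩
          · have h2 : w x < w (w⁻¹ (p + 1)) := hm2 x (w⁻¹ (p + 1)) hx1 (by omega) hsn
            have hlb := (hwIcc x (by omega) (by omega)).1
            exact ⟨hlb, by omega⟩
        · rintro ⟨hm1', hm2'⟩
          refine ⟨w⁻¹ m, ?_, w.apply_symm_apply m⟩
          have hxI := hwInv m hm1' (by omega)
          have hwm : w (w⁻¹ m) = m := w.apply_symm_apply m
          rcases le_or_gt (w⁻¹ m) k with hle | hgt
          · left
            refine ⟨hxI.1, ?_⟩
            by_contra hgt2
            push_neg at hgt2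
            have := hm1 (w⁻¹ p) (w⁻¹ m) hr1 hgt2 hle
            omega
          · right
            refine ⟨by omega, ?_⟩
            by_contra hgt2
            push_neg at hgt2
            rcases eq_or_lt_of_le (show w⁻¹ (p + 1) ≤ w⁻¹ m by omega) with heq | hlt
            · rw [← heq] at hwm
              omega
            · have := hm2 (w⁻¹ (p + 1)) (w⁻¹ m) (by omega) hlt hxI.2
              omega
      have hcard1 : (Finset.Icc 1 (w⁻¹ p) ∪ Finset.Icc (k + 1) (w⁻¹ (p + 1) - 1)).card
          = w⁻¹ p + (w⁻¹ (p + 1) - 1 - k) := by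
        rw [Finset.card_union_of_disjoint]
        · rw [Nat.card_Icc, Nat.card_Icc]; omega
        · apply Finset.disjoint_left.mpr
          intro a ha hb
          simp only [Finset.mem_Icc] at ha hb
          omega
      have hcard2 : ((Finset.Icc 1 (w⁻¹ p) ∪ Finset.Icc (k + 1) (w⁻¹ (p + 1) - 1)).image w).card
          = (Finset.Icc 1 (w⁻¹ p) ∪ Finset.Icc (k + 1) (w⁻¹ (p + 1) - 1)).card :=
        Finset.card_image_of_injective _ hinj
      have hfin : (Finset.Icc 1 p).card = w⁻¹ p + (w⁻¹ (p + 1) - 1 - k) := by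
        rw [← himg, hcard2, hcard1]
      rw [Nat.card_Icc] at hfin
      omega
    have hq1 : k + (p - w⁻¹ p) + 1 = w⁻¹ (p + 1) := hcount.symm
    have hwq1 : w (k + (p - w⁻¹ p) + 1) = p + 1 := by rw [hq1, hws]
    have hwq : w (k + (p - w⁻¹ p)) < p := by
      have h1 : w (k + (p - w⁻¹ p)) < w (k + (p - w⁻¹ p) + 1) :=
        hm2 (k + (p - w⁻¹ p)) (k + (p - w⁻¹ p) + 1) (by omega) (by omega) (by omega)
      have h2 : w (k + (p - w⁻¹ p)) ≠ p := by
        intro he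
        have : k + (p - w⁻¹ p) = w⁻¹ p := hinj (by rw [he, hwr])
        omega
      omega
    have hqJ : k + (p - w⁻¹ p) ∉ DeltaW n k w := by
      intro hmem
      have := hmem.2.2.2
      omega
    have hinvmul : ∀ m : ℕ, (w * u)⁻¹ m = u⁻¹ (w⁻¹ m) := by
      intro m; rw [mul_inv_rev]; rfl
    simp only [Coess, Set.mem_setOf_eq]
    refine ⟨hp1, hpn, by omega, by omega, ?_, ?_, ?_, ?_⟩
    · rw [hinvmul]
      by_contra hgt
      push_neg at hgt
      exact hkJ (hadjI (w⁻¹ p) k (by omega) (by omega))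
    · rw [hinvmul]
      by_contra hle
      push_neg at hle
      exact hqJ (hadjI (w⁻¹ (p + 1)) (k + (p - w⁻¹ p)) (by omega) (by omega))
    · show w (u (k + (p - w⁻¹ p))) ≤ p
      have huq : u (k + (p - w⁻¹ p)) ≤ k + (p - w⁻¹ p) := by
        by_contra hgt
        push_neg at hgt
        exact hqJ (hadj (k + (p - w⁻¹ p)) (k + (p - w⁻¹ p)) (by omega) (by omega))
      have h2 : w (k + (p - w⁻¹ p))
          = w (u (k + (p - w⁻¹ p))) + (k + (p - w⁻¹ p) - u (k + (p - w⁻¹ p))) :=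
        adj_run hJstep (adjset_symm (hadj (k + (p - w⁻¹ p)))) huq
      omega
    · show p < w (u (k + (p - w⁻¹ p) + 1))
      have hnJ : k + (p - w⁻¹ p) + 1 ≤ u (k + (p - w⁻¹ p) + 1) := by
        by_contra hlt
        push_neg at hlt
        exact hqJ (hadj (k + (p - w⁻¹ p) + 1) (k + (p - w⁻¹ p)) (by omega) (by omega))
      have h2 : w (u (k + (p - w⁻¹ p) + 1))
          = w (k + (p - w⁻¹ p) + 1) + (u (k + (p - w⁻¹ p) + 1) - (k + (p - w⁻¹ p) + 1)) :=
        adj_run hJstep (hadj (k + (p - w⁻¹ p) + 1)) hnJ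
      omega
  obtain ⟨hri1, hrik, hrip⟩ := boxfacts pi hbi hnii
  obtain ⟨hrj1, hrjk, hrjp⟩ := boxfacts pj hbj hnij
  exact ⟨pi, k + (pi - w⁻¹ pi), pj, w⁻¹ pj,
    box2 pi hbi hri1 hrik hrip, box1 pj hbj hrj1 hrjk, hij, by omega⟩
end
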